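/- arXiv:2010.11479 — 7 statements merged into one kernel-verified Lean document; each statement's English description precedes it below -/
import Mathlib

section
/- For all natural numbers j, n ≥ 1 and all real r with 0 ≤ r ≤ 1, we have ∑_{i=1}^n (i+r)^j ≤ (n+r)^{j+1}/(j+1) + (n+r)^j/2 + j·(n+r)^{j-1}/12. -/
open Finset

lemma gfi_coeff (j k : ℕ) (hj : 1 ≤ j) :
    12*(j+1)*(Nat.choose j k) + ((if k = j+1 then 12 else 0) +
      (if k = j then 6*(j+1) else 0) + (if k = j-1 then j*(j+1) else 0))
    ≤ 12*(Nat.choose (j+1) k) + 6*(j+1)*(Nat.choose j k) + j*(j+1)*(Nat.choose (j-1) k) := by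
  rcases Nat.lt_or_ge (j+1) k with h | h
  · rw [Nat.choose_eq_zero_of_lt h, Nat.choose_eq_zero_of_lt (show j < k by omega),
      Nat.choose_eq_zero_of_lt (show j-1 < k by omega), if_neg (by omega), if_neg (by omega),
      if_neg (by omega)]
    omega
  rcases eq_or_lt_of_le h with h1 | h1
  · -- k = j+1
    have e1 : (j+1).choose k = 1 := by rw [← h1]; exact Nat.choose_self _
    have e2 : j.choose k = 0 := Nat.choose_eq_zero_of_lt (by omega)
    have e3 : (j-1).choose k = 0 := Nat.choose_eq_zero_of_lt (by omega)
    rw [e1, e2, e3, if_pos (by omega), if_neg (by omega), if_neg (by omega)]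
    omega
  have h1' : k ≤ j := by omega
  rcases eq_or_lt_of_le h1' with h2 | h2
  · -- k = j
    subst h2
    have e1 : (k+1).choose k = k+1 := Nat.choose_succ_self_right k
    have e2 : k.choose k = 1 := Nat.choose_self k
    have e3 : (k-1).choose k = 0 := Nat.choose_eq_zero_of_lt (by omega)
    rw [e1, e2, e3, if_neg (by omega), if_pos rfl, if_neg (by omega)]
    omega
  -- k < j : write j = k + m, m ≥ 1
  obtain ⟨m, hm1, hm⟩ : ∃ m, 1 ≤ m ∧ j = k + m := ⟨j - k, by omega, by omega⟩
  subst hm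
  have hA := Nat.choose_mul_succ_eq (k+m) k
  have hB := Nat.choose_mul_succ_eq (k+m-1) k
  rw [show k+m-1+1 = k+m by omega] at hB
  rw [show k+m+1-k = m+1 by omega] at hA
  rw [show k+m-k = m by omega] at hB
  -- hA : (k+m).choose k * (k+m+1) = (k+m+1).choose k * (m+1)
  -- hB : (k+m-1).choose k * (k+m) = (k+m).choose k * m
  rw [if_neg (by omega), if_neg (by omega)]
  set a := (k+m+1).choose k with ha
  set b := (k+m).choose k with hb
  set c := (k+m-1).choose k with hc
  rcases eq_or_lt_of_le hm1 with h3 | h3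
  · -- m = 1, k = j - 1
    rw [if_pos (by omega)]
    have hc1 : c = 1 := by rw [hc, show k+m-1 = k by omega]; exact Nat.choose_self k
    have hb1 : b = k + 1 := by rw [hb, ← h3]; exact Nat.choose_succ_self_right k
    rw [← h3] at hA ⊢
    rw [hc1, hb1]
    -- hA : (k+1)*(k+2) = a * 2
    nlinarith [hA]
  · -- m ≥ 2
    rw [if_neg (by omega)]
    have key : 6*(m+1) ≤ 12 + m*(m+1) := by
      obtain ⟨t, rfl⟩ : ∃ t, m = t + 2 := ⟨m-2, by omega⟩
      have ht : t ≤ t * t := by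
        rcases Nat.eq_zero_or_pos t with h0 | h0
        · simp [h0]
        · exact Nat.le_mul_of_pos_left t h0
      nlinarith [ht]
    apply Nat.le_of_mul_le_mul_left _ (show 0 < m + 1 by omega)
    calc (m+1) * (12*(k+m+1)*b + (0 + 0 + 0))
        = (b*(k+m+1)) * (6*(m+1)) + (m+1)*(6*(k+m+1)*b) := by ring
      _ ≤ (b*(k+m+1)) * (12 + m*(m+1)) + (m+1)*(6*(k+m+1)*b) := by
          exact Nat.add_le_add_right (Nat.mul_le_mul_left _ key) _
      _ = 12*(b*(k+m+1)) + (k+m+1)*((b*m)*(m+1)) + (m+1)*(6*(k+m+1)*b) := by ring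
      _ = 12*(a*(m+1)) + (k+m+1)*((c*(k+m))*(m+1)) + (m+1)*(6*(k+m+1)*b) := by rw [hA, hB]
      _ = (m+1) * (12*a + 6*(k+m+1)*b + (k+m)*(k+m+1)*c) := by ring

lemma gfi_poly (j : ℕ) (hj : 1 ≤ j) (x : ℝ) (hx : 0 ≤ x) :
    12*((j:ℝ)+1)*(x+1)^j + (12*x^(j+1) + 6*((j:ℝ)+1)*x^j + (j:ℝ)*((j:ℝ)+1)*x^(j-1))
    ≤ 12*(x+1)^(j+1) + 6*((j:ℝ)+1)*(x+1)^j + (j:ℝ)*((j:ℝ)+1)*(x+1)^(j-1) := by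
  have exp : ∀ n : ℕ, n < j + 2 → (x+1)^n = ∑ k ∈ range (j+2), (Nat.choose n k : ℝ) * x^k := by
    intro n hn
    rw [add_pow]
    rw [← Finset.sum_subset (Finset.range_subset_range.2 (by omega : n + 1 ≤ j + 2))]
    · exact Finset.sum_congr rfl fun k _ => by ring
    · intro k _ hk
      rw [Nat.choose_eq_zero_of_lt (by simpa using hk)]
      simp
  have del : ∀ p : ℕ, p < j + 2 → x^p = ∑ k ∈ range (j+2), (if k = p then (1:ℝ) else 0) * x^k := by
    intro p hp
    simp only [ite_mul, one_mul, zero_mul]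
    rw [Finset.sum_ite_eq' (range (j+2)) p (fun k => x^k), if_pos (by simpa using hp)]
  set N := j + 2 with hN
  have L : ℕ → ℕ := fun k => 12*(j+1)*(Nat.choose j k) + ((if k = j+1 then 12 else 0) +
      (if k = j then 6*(j+1) else 0) + (if k = j-1 then j*(j+1) else 0))
  have hL : 12*((j:ℝ)+1)*(x+1)^j + (12*x^(j+1) + 6*((j:ℝ)+1)*x^j + (j:ℝ)*((j:ℝ)+1)*x^(j-1))
      = ∑ k ∈ range N, ((12*(j+1)*(Nat.choose j k) + ((if k = j+1 then 12 else 0) +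
      (if k = j then 6*(j+1) else 0) + (if k = j-1 then j*(j+1) else 0)) : ℕ) : ℝ) * x^k := by
    rw [exp j (by omega), del (j+1) (by omega), del j (by omega), del (j-1) (by omega),
      Finset.mul_sum, Finset.mul_sum, Finset.mul_sum, Finset.mul_sum,
      ← Finset.sum_add_distrib, ← Finset.sum_add_distrib, ← Finset.sum_add_distrib]
    refine Finset.sum_congr rfl fun k _ => ?_
    split_ifs <;> push_cast <;> ring
  have hR : 12*(x+1)^(j+1) + 6*((j:ℝ)+1)*(x+1)^j + (j:ℝ)*((j:ℝ)+1)*(x+1)^(j-1)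
      = ∑ k ∈ range N, ((12*(Nat.choose (j+1) k) + 6*(j+1)*(Nat.choose j k)
        + j*(j+1)*(Nat.choose (j-1) k) : ℕ) : ℝ) * x^k := by
    rw [exp (j+1) (by omega), exp j (by omega), exp (j-1) (by omega),
      Finset.mul_sum, Finset.mul_sum, Finset.mul_sum,
      ← Finset.sum_add_distrib, ← Finset.sum_add_distrib]
    refine Finset.sum_congr rfl fun k _ => ?_
    push_cast; ring
  rw [hL, hR]
  refine Finset.sum_le_sum fun k _ => ?_
  have := gfi_coeff j k hj
  exact mul_le_mul_of_nonneg_right (by exact_mod_cast this) (pow_nonneg hx k)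

lemma gfi_step (j : ℕ) (hj : 1 ≤ j) (x : ℝ) (hx : 0 ≤ x) :
    (x+1)^j + (x^(j+1)/((j:ℝ)+1) + x^j/2 + (j:ℝ)*x^(j-1)/12)
    ≤ (x+1)^(j+1)/((j:ℝ)+1) + (x+1)^j/2 + (j:ℝ)*(x+1)^(j-1)/12 := by
  have hc : (0:ℝ) < 12*((j:ℝ)+1) := by positivity
  rw [← mul_le_mul_iff_right₀ hc]
  have hne : ((j:ℝ)+1) ≠ 0 := by positivity
  have e1 : 12*((j:ℝ)+1) * ((x+1)^j + (x^(j+1)/((j:ℝ)+1) + x^j/2 + (j:ℝ)*x^(j-1)/12))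
      = 12*((j:ℝ)+1)*(x+1)^j + (12*x^(j+1) + 6*((j:ℝ)+1)*x^j + (j:ℝ)*((j:ℝ)+1)*x^(j-1)) := by
    field_simp; ring
  have e2 : 12*((j:ℝ)+1) * ((x+1)^(j+1)/((j:ℝ)+1) + (x+1)^j/2 + (j:ℝ)*(x+1)^(j-1)/12)
      = 12*(x+1)^(j+1) + 6*((j:ℝ)+1)*(x+1)^j + (j:ℝ)*((j:ℝ)+1)*(x+1)^(j-1) := by
    field_simp; ring
  rw [e1, e2]
  exact gfi_poly j hj x hx

/-- Generalized Faulhaber inequality. -/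
theorem generalized_faulhaber_inequality (j n : ℕ) (hj : 1 ≤ j) (hn : 1 ≤ n)
    (r : ℝ) (hr0 : 0 ≤ r) (hr1 : r ≤ 1) :
    ∑ i ∈ Finset.Icc 1 n, ((i : ℝ) + r) ^ j ≤
      ((n : ℝ) + r) ^ (j + 1) / (j + 1) + ((n : ℝ) + r) ^ j / 2 +
        (j : ℝ) * ((n : ℝ) + r) ^ (j - 1) / 12 := by
  clear hn
  induction n with
  | zero =>
    simp only [Nat.cast_zero, zero_add]
    rw [show Finset.Icc 1 0 = ∅ from rfl]
    simp only [Finset.sum_empty]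
    positivity
  | succ n ih =>
    rw [Finset.sum_Icc_succ_top (by omega)]
    have hx : (0:ℝ) ≤ (n:ℝ) + r := by positivity
    have := gfi_step j hj ((n:ℝ) + r) hx
    have hcast : ((n+1 : ℕ) : ℝ) + r = ((n:ℝ) + r) + 1 := by push_cast; ring
    rw [hcast]
    calc ∑ i ∈ Finset.Icc 1 n, ((i : ℝ) + r) ^ j + (((n:ℝ)+r) + 1) ^ j
        ≤ (((n:ℝ)+r)^(j+1)/((j:ℝ)+1) + ((n:ℝ)+r)^j/2 + (j:ℝ)*((n:ℝ)+r)^(j-1)/12)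
          + (((n:ℝ)+r) + 1) ^ j := by linarith [ih]
      _ ≤ (((n:ℝ)+r)+1)^(j+1)/((j:ℝ)+1) + (((n:ℝ)+r)+1)^j/2 + (j:ℝ)*(((n:ℝ)+r)+1)^(j-1)/12 := by
          linarith [this]
end

section
/- For every real δ with 0 < δ < 1, the bracketing number of the unit square satisfies N_{[ ]}(2, δ) ≤ 2·log(2)·δ^{-2} + 3·(log(2)+1)·δ^{-1} − (13/9·log(2) − 1). -/
open MeasureTheory

/-- The bracketing number `N_{[ ]}(d, δ)`: the smallest number of closed
axis-parallel boxes `[x, y]` with `x, y ∈ [0,1]^d`,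
`λ_d([0,y]) - λ_d([0,x]) ≤ δ` (i.e. `∏ y_j - ∏ x_j ≤ δ`), whose union
contains `[0,1]^d`. -/
noncomputable def bracketingNumber (d : ℕ) (δ : ℝ) : ℕ :=
  sInf {n : ℕ | ∃ x y : Fin n → (Fin d → ℝ),
    (∀ i, x i ∈ Set.Icc (0 : Fin d → ℝ) 1 ∧ y i ∈ Set.Icc (x i) 1 ∧
      (∏ j, y i j) - (∏ j, x i j) ≤ δ) ∧
    Set.Icc (0 : Fin d → ℝ) 1 ⊆ ⋃ i, Set.Icc (x i) (y i)}

private lemma log_ge_one_sub_inv {x : ℝ} (hx : 0 < x) : 1 - x⁻¹ ≤ Real.log x := by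
  have h := Real.log_le_sub_one_of_pos (x := x⁻¹) (by positivity)
  rw [Real.log_inv] at h
  linarith

set_option maxHeartbeats 1000000 in
private lemma cover_le (δ : ℝ) (hδ : 0 < δ) (M : ℕ) (hs : 2 ≤ δ * M) :
    bracketingNumber 2 δ ≤
      ∑ i : Fin M, ⌈Real.log (δ * M / (δ * M - 1)) * ((i : ℕ) + 1)⌉₊ := by
  set c : ℝ := Real.log (δ * M / (δ * M - 1)) with hc
  have hMR : (1 : ℝ) ≤ (M : ℝ) := by
    by_contra h
    push_neg at h
    have : (M : ℝ) = 0 := by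
      have : M = 0 := by exact_mod_cast Nat.lt_one_iff.mp (by exact_mod_cast h)
      simp [this]
    nlinarith
  have hM0 : (0 : ℝ) < M := by linarith
  have hs1 : (1 : ℝ) ≤ δ * M - 1 := by linarith
  have hs0 : (0 : ℝ) < δ * M - 1 := by linarith
  have hc0 : 0 < c := by
    apply Real.log_pos
    rw [lt_div_iff₀ hs0]; linarith
  have hcle : c ≤ Real.log 2 := by
    apply Real.log_le_log (by positivity)
    rw [div_le_iff₀ hs0]; linarith
  -- the number of cells per column
  set N : ℕ → ℕ := fun j => ⌈c * j⌉₊ with hN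
  -- ratio and heights
  set r : ℕ → ℝ := fun j => ((j : ℝ) - 1) / j with hr
  set B : ℕ → ℕ → ℝ := fun j k => δ * M * (1 - (r j) ^ k) with hB
  have hr_nonneg : ∀ j : ℕ, 1 ≤ j → 0 ≤ r j := by
    intro j hj
    have : (1 : ℝ) ≤ (j : ℝ) := by exact_mod_cast hj
    apply div_nonneg <;> linarith
  have hr_le_one : ∀ j : ℕ, 1 ≤ j → r j ≤ 1 := by
    intro j hj
    have h1 : (1 : ℝ) ≤ (j : ℝ) := by exact_mod_cast hj
    rw [hr, div_le_one (by linarith)]; linarith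
  have hB_nonneg : ∀ j k : ℕ, 1 ≤ j → 0 ≤ B j k := by
    intro j k hj
    have := pow_le_one₀ (hr_nonneg j hj) (hr_le_one j hj) (n := k)
    have hδM : (0:ℝ) ≤ δ * M := by linarith
    simp only [hB]
    nlinarith
  have hB_mono : ∀ j k : ℕ, 1 ≤ j → B j k ≤ B j (k + 1) := by
    intro j k hj
    have h1 : r j ^ (k+1) ≤ r j ^ k :=
      pow_le_pow_of_le_one (hr_nonneg j hj) (hr_le_one j hj) (Nat.le_succ k)
    have hδM : (0:ℝ) ≤ δ * M := by linarith
    simp only [hB]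
    nlinarith
  have hB0 : ∀ j : ℕ, B j 0 = 0 := by intro j; simp [hB]
  -- key: the top of each column reaches 1
  have hBN : ∀ j : ℕ, 1 ≤ j → (1 : ℝ) ≤ B j (N j) := by
    intro j hj
    rcases eq_or_lt_of_le hj with h1 | h2
    · -- j = 1
      have hj1 : j = 1 := h1.symm
      subst hj1
      have hN1 : N 1 ≠ 0 := by
        simp only [hN]
        rw [← Nat.pos_iff_ne_zero, Nat.ceil_pos]
        simpa using hc0
      have : r 1 = 0 := by simp [hr]
      simp only [hB, this, zero_pow hN1]
      linarith
    · -- j ≥ 2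
      have hj2 : 2 ≤ j := h2
      have hjR : (2 : ℝ) ≤ (j : ℝ) := by exact_mod_cast hj2
      have hr0 : 0 < r j := by
        rw [hr]; apply div_pos <;> linarith
      have hr1 : r j < 1 := by
        rw [hr, div_lt_one (by linarith)]; linarith
      -- r ^ N j ≤ (δM - 1)/(δM)
      have hpow : r j ^ (N j) ≤ (δ * M - 1) / (δ * M) := by
        have hlogr : Real.log (r j) ≤ -(1 / (j : ℝ)) := by
          have h := log_ge_one_sub_inv (x := (r j)⁻¹) (by positivity)
          rw [Real.log_inv, inv_inv] at h
          have : 1 - r j = 1 / (j:ℝ) := by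
            rw [hr]; field_simp; ring
          linarith
        have hNj : c * j ≤ (N j : ℝ) := Nat.le_ceil _
        have hlog2 : (N j : ℝ) * Real.log (r j) ≤ -c := by
          have hNj0 : (0:ℝ) ≤ (N j : ℝ) := by positivity
          have h1 : (N j : ℝ) * Real.log (r j) ≤ (N j : ℝ) * (-(1/(j:ℝ))) :=
            mul_le_mul_of_nonneg_left hlogr hNj0
          have hj0 : (0:ℝ) < (j:ℝ) := by linarith
          have h2 : c ≤ (N j : ℝ) * (1/(j:ℝ)) := by
            rw [mul_one_div, le_div_iff₀ hj0]; linarith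
          nlinarith
        have hrpow : r j ^ (N j) = Real.exp ((N j : ℝ) * Real.log (r j)) := by
          rw [← Real.log_pow, Real.exp_log (by positivity)]
        have hgoal : Real.exp ((N j:ℝ) * Real.log (r j)) ≤ (δ * M - 1)/(δ * M) := by
          have h3 : Real.exp ((N j:ℝ) * Real.log (r j)) ≤ Real.exp (-c) :=
            Real.exp_le_exp.mpr hlog2
          have h4 : Real.exp (-c) = (δ * M - 1)/(δ * M) := by
            rw [hc, ← Real.log_inv, Real.exp_log]
            · rw [inv_div]
            · positivity
          rw [← h4]; exact h3
        rw [hrpow]; exact hgoal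
      have hδM0 : (0:ℝ) < δ * M := by linarith
      have : δ * M * (1 - r j ^ (N j)) ≥ δ * M * (1 - (δ * M - 1)/(δ * M)) := by
        apply mul_le_mul_of_nonneg_left _ (le_of_lt hδM0)
        linarith
      have heq : δ * M * (1 - (δ * M - 1)/(δ * M)) = 1 := by
        field_simp; ring
      simp only [hB]
      linarith [this, heq.symm.le]
  classical
  have hM1 : 1 ≤ M := by exact_mod_cast hMR
  have hNpos : ∀ j : ℕ, 1 ≤ j → 1 ≤ N j := by
    intro j hj
    have hj0 : (0:ℝ) < (j:ℝ) := by exact_mod_cast hj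
    simp only [hN]
    rw [Nat.one_le_iff_ne_zero, ← Nat.pos_iff_ne_zero, Nat.ceil_pos]
    positivity
  -- the corners of the cells
  set X : (Σ i : Fin M, Fin (N (i.val + 1))) → (Fin 2 → ℝ) :=
    fun p => ![(p.1.val : ℝ) / M, min 1 (B (p.1.val + 1) p.2.val)] with hX
  set Y : (Σ i : Fin M, Fin (N (i.val + 1))) → (Fin 2 → ℝ) :=
    fun p => ![((p.1.val : ℝ) + 1) / M, min 1 (B (p.1.val + 1) (p.2.val + 1))] with hY
  have hprop : ∀ p, X p ∈ Set.Icc (0 : Fin 2 → ℝ) 1 ∧ Y p ∈ Set.Icc (X p) 1 ∧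
      (∏ t, Y p t) - (∏ t, X p t) ≤ δ := by
    intro p
    set i : ℕ := p.1.val with hi
    set k : ℕ := p.2.val with hk
    have hiM : i < M := p.1.isLt
    have hiMR : (i : ℝ) + 1 ≤ (M : ℝ) := by exact_mod_cast hiM
    have hiR : (0:ℝ) ≤ (i:ℝ) := by positivity
    have hj1 : 1 ≤ i + 1 := Nat.le_add_left 1 i
    have hBk := hB_nonneg (i+1) k hj1
    have hBk1 := hB_nonneg (i+1) (k+1) hj1
    have hBmono := hB_mono (i+1) k hj1
    have hx1 : (i:ℝ)/M ≤ 1 := by rw [div_le_one hM0]; linarith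
    have hy1 : ((i:ℝ)+1)/M ≤ 1 := by rw [div_le_one hM0]; linarith
    refine ⟨?_, ?_, ?_⟩
    · rw [Set.mem_Icc]
      constructor <;> rw [Pi.le_def, Fin.forall_fin_two] <;>
        simp only [hX, Matrix.cons_val_zero, Matrix.cons_val_one, Matrix.head_cons,
          Pi.zero_apply, Pi.one_apply]
      · exact ⟨by positivity, le_min zero_le_one hBk⟩
      · exact ⟨hx1, min_le_left _ _⟩
    · rw [Set.mem_Icc]
      constructor <;> rw [Pi.le_def, Fin.forall_fin_two] <;>
        simp only [hX, hY, Matrix.cons_val_zero, Matrix.cons_val_one, Matrix.head_cons,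
          Pi.one_apply]
      · refine ⟨by gcongr <;> linarith, min_le_min le_rfl hBmono⟩
      · exact ⟨hy1, min_le_left _ _⟩
    · rw [Fin.prod_univ_two, Fin.prod_univ_two]
      simp only [hX, hY, Matrix.cons_val_zero, Matrix.cons_val_one, Matrix.head_cons]
      by_cases hcase : 1 ≤ B (i+1) k
      · rw [min_eq_left hcase, min_eq_left (le_trans hcase hBmono)]
        have heq : ((i:ℝ)+1)/M * 1 - (i:ℝ)/M * 1 = 1/M := by field_simp; ring
        rw [heq, div_le_iff₀ hM0]
        linarith
      · push_neg at hcase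
        rw [min_eq_right hcase.le]
        have h1 : ((i:ℝ)+1)/M * min 1 (B (i+1) (k+1)) ≤ ((i:ℝ)+1)/M * B (i+1) (k+1) := by
          apply mul_le_mul_of_nonneg_left (min_le_right _ _) (by positivity)
        have hcast : ((i+1 : ℕ) : ℝ) = (i:ℝ) + 1 := by push_cast; ring
        have hrj : r (i+1) = (i:ℝ) / ((i:ℝ) + 1) := by
          rw [hr]; simp only [hcast]; ring_nf
        have hident : ((i:ℝ)+1)/M * B (i+1) (k+1) - (i:ℝ)/M * B (i+1) k = δ := by
          simp only [hB, pow_succ, hrj]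
          have hi1 : (i:ℝ) + 1 ≠ 0 := by positivity
          have hMne : (M:ℝ) ≠ 0 := ne_of_gt hM0
          field_simp
          ring
        linarith
  -- rewrite the target sum
  have hsum_eq : (∑ t : Fin M, ⌈c * ((t : ℕ) + 1)⌉₊) = ∑ t : Fin M, N (t.val + 1) := by
    refine Finset.sum_congr rfl fun t _ => ?_
    simp only [hN]
    congr 1
    push_cast
    ring
  rw [hsum_eq]
  have hcard : Fintype.card (Σ i : Fin M, Fin (N (i.val + 1))) = ∑ t : Fin M, N (t.val + 1) := by
    simp [Fintype.card_sigma]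
  unfold bracketingNumber
  apply Nat.sInf_le
  have e : Fin (∑ t : Fin M, N (t.val + 1)) ≃ (Σ i : Fin M, Fin (N (i.val + 1))) :=
    (finCongr hcard.symm).trans (Fintype.equivFin _).symm
  refine ⟨fun m => X (e m), fun m => Y (e m), fun m => hprop (e m), ?_⟩
  -- covering
  intro w hw
  rw [Set.mem_Icc] at hw
  have hu0 : 0 ≤ w 0 := hw.1 0
  have hu1 : w 0 ≤ 1 := hw.2 0
  have hv0 : 0 ≤ w 1 := hw.1 1
  have hv1 : w 1 ≤ 1 := hw.2 1
  set u := w 0 with hu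
  set v := w 1 with hv
  set j : ℕ := max 1 ⌈u * M⌉₊ with hj
  have hj1 : 1 ≤ j := le_max_left _ _
  have hjM : j ≤ M := by
    apply max_le hM1
    apply Nat.ceil_le.mpr
    nlinarith
  have hjlow : ((j : ℝ) - 1) ≤ u * M := by
    by_cases hcl : ⌈u * M⌉₊ ≤ 1
    · have : j = 1 := by omega
      rw [this]; simp; positivity
    · push_neg at hcl
      have hje : j = ⌈u * M⌉₊ := by omega
      have : (j - 1 : ℕ) < ⌈u * M⌉₊ := by omega
      have := Nat.lt_ceil.mp this
      have hcast : ((j - 1 : ℕ) : ℝ) = (j:ℝ) - 1 := by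
        have : 1 ≤ j := hj1
        push_cast [Nat.cast_sub this]; ring
      linarith [hcast ▸ Nat.lt_ceil.mp ‹(j - 1 : ℕ) < ⌈u * M⌉₊›]
  have hjhigh : u * M ≤ (j : ℝ) := by
    have h1 : u * M ≤ (⌈u * M⌉₊ : ℝ) := Nat.le_ceil _
    have h2 : (⌈u * M⌉₊ : ℝ) ≤ (j : ℝ) := by exact_mod_cast le_max_right 1 ⌈u * M⌉₊
    linarith
  -- choose the row
  have hPex : ∃ k : ℕ, v ≤ min 1 (B j (k + 1)) := by
    refine ⟨N j - 1, ?_⟩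
    have hNj := hNpos j hj1
    have : N j - 1 + 1 = N j := by omega
    rw [this, min_eq_left (hBN j hj1)]
    exact hv1
  set k : ℕ := Nat.find hPex with hkdef
  have hkspec : v ≤ min 1 (B j (k + 1)) := Nat.find_spec hPex
  have hkN : k < N j := by
    have h1 : k ≤ N j - 1 := Nat.find_le (by
      have hNj := hNpos j hj1
      have : N j - 1 + 1 = N j := by omega
      rw [this, min_eq_left (hBN j hj1)]
      exact hv1)
    have := hNpos j hj1
    omega
  have hklow : min 1 (B j k) ≤ v := by
    rcases Nat.eq_zero_or_pos k with h0 | hpos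
    · rw [h0, hB0, min_eq_right zero_le_one]
      exact hv0
    · have hlt : k - 1 < k := by omega
      have := Nat.find_min hPex hlt
      have hkk : k - 1 + 1 = k := by omega
      rw [hkk] at this
      push_neg at this
      exact this.le
  -- assemble the index
  have hjj : j - 1 + 1 = j := by omega
  have hiM : j - 1 < M := by omega
  refine Set.mem_iUnion.mpr ⟨e.symm ⟨⟨j - 1, hiM⟩, ⟨k, by rw [hjj]; exact hkN⟩⟩, ?_⟩
  simp only [Equiv.apply_symm_apply]
  have hcast : ((j - 1 : ℕ) : ℝ) = (j : ℝ) - 1 := by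
    push_cast [Nat.cast_sub hj1]; ring
  rw [Set.mem_Icc]
  constructor <;> rw [Pi.le_def, Fin.forall_fin_two] <;>
      simp only [hX, hY, Matrix.cons_val_zero, Matrix.cons_val_one, Matrix.head_cons, hjj, hcast]
  · refine ⟨?_, hklow⟩
    rw [div_le_iff₀ hM0]
    linarith
  · refine ⟨?_, hkspec⟩
    have heq : (j:ℝ) - 1 + 1 = (j:ℝ) := by ring
    rw [heq, le_div_iff₀ hM0]
    linarith

set_option maxHeartbeats 1000000 in
theorem bracketing_number_dim_two (δ : ℝ) (hδ0 : 0 < δ) (hδ1 : δ < 1) :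
    (bracketingNumber 2 δ : ℝ) ≤
      2 * Real.log 2 * δ⁻¹ ^ 2 + 3 * (Real.log 2 + 1) * δ⁻¹
        - (13 / 9 * Real.log 2 - 1) := by
  have hL1 : (0.6931471803 : ℝ) < Real.log 2 := Real.log_two_gt_d9
  have hL2 : Real.log 2 < 0.6931471808 := Real.log_two_lt_d9
  set L : ℝ := Real.log 2 with hL
  set t : ℝ := δ⁻¹ with ht
  have htδ : δ * t = 1 := mul_inv_cancel₀ (ne_of_gt hδ0)
  have ht0 : 0 < t := by positivity
  have ht1 : 1 < t := by nlinarith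
  set M : ℕ := ⌈2 / δ⌉₊ with hM
  have h2δ : (2:ℝ)/δ = 2 * t := by rw [ht, div_eq_mul_inv]
  have hceil : (2:ℝ)/δ ≤ (M:ℝ) := Nat.le_ceil _
  have hs : 2 ≤ δ * M := by
    have h1 : δ * ((2:ℝ)/δ) = 2 := by field_simp
    nlinarith
  have key := cover_le δ hδ0 M hs
  set c : ℝ := Real.log (δ * M / (δ * M - 1)) with hc
  have hMR : (2:ℝ) ≤ (M:ℝ) := by nlinarith
  have hs0 : (0:ℝ) < δ * M - 1 := by linarith
  have hc0 : 0 < c := by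
    apply Real.log_pos
    rw [lt_div_iff₀ hs0]; linarith
  have hcle : c ≤ L := by
    apply Real.log_le_log (by positivity)
    rw [div_le_iff₀ hs0]; linarith
  -- cast the bound
  have hkey : (bracketingNumber 2 δ : ℝ) ≤ ((∑ i : Fin M, ⌈c * ((i:ℕ) + 1)⌉₊ : ℕ) : ℝ) := by
    exact_mod_cast key
  rcases le_or_gt δ (1/2) with hhalf | hhalf
  · -- small δ : generic count
    have ht2 : 2 ≤ t := by nlinarith
    have hMle : (M:ℝ) ≤ 2*t + 1 := by
      have := Nat.ceil_lt_add_one (R := ℝ) (a := 2/δ) (by positivity)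
      rw [h2δ] at this
      exact le_of_lt this
    have hsum : ((∑ i : Fin M, ⌈c * ((i:ℕ) + 1)⌉₊ : ℕ) : ℝ) ≤ c * ((M:ℝ) * (M+1)) / 2 + M := by
      have hle : ∀ i : Fin M, ((⌈c * ((i:ℕ) + 1)⌉₊ : ℕ) : ℝ) ≤ c * ((i:ℕ) + 1) + 1 := by
        intro i
        exact le_of_lt (Nat.ceil_lt_add_one (by positivity))
      calc ((∑ i : Fin M, ⌈c * ((i:ℕ) + 1)⌉₊ : ℕ) : ℝ)
          = ∑ i : Fin M, ((⌈c * ((i:ℕ) + 1)⌉₊ : ℕ) : ℝ) := by push_cast; rfl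
        _ ≤ ∑ i : Fin M, (c * ((i:ℕ) + 1) + 1) := Finset.sum_le_sum fun i _ => hle i
        _ = c * (∑ i : Fin M, (((i:ℕ) : ℝ) + 1)) + M := by
            rw [Finset.sum_add_distrib, Finset.mul_sum]
            simp [Finset.sum_const, mul_comm]
        _ = c * ((M:ℝ) * (M+1)) / 2 + M := by
            have hnat : ∀ m : ℕ, (∑ i ∈ Finset.range m, (i + 1)) * 2 = m * (m+1) := by
              intro m
              induction m with
              | zero => simp
              | succ m ih => rw [Finset.sum_range_succ, add_mul, ih]; ring
            have : (∑ i : Fin M, (((i:ℕ) : ℝ) + 1)) = ((M:ℝ) * (M+1)) / 2 := by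
              rw [Fin.sum_univ_eq_sum_range (fun i => ((i : ℝ) + 1)) M]
              have h := congrArg (fun n : ℕ => (n : ℝ)) (hnat M)
              push_cast at h
              push_cast
              linarith
            rw [this]
            ring
    have hM0 : (0:ℝ) ≤ (M:ℝ) := by positivity
    have h1 : (M:ℝ) * ((M:ℝ)+1) ≤ (2*t+1) * (2*t+2) := by nlinarith
    have h2 : c * ((M:ℝ) * ((M:ℝ)+1)) ≤ L * ((2*t+1) * (2*t+2)) :=
      mul_le_mul hcle h1 (by positivity) (by linarith)
    nlinarith [hkey, hsum]
  · -- large δ : M = 3 or 4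
    have hM4 : M ≤ 4 := by
      apply Nat.ceil_le.mpr
      rw [div_le_iff₀ hδ0]; push_cast; linarith
    have hM3 : 3 ≤ M := by
      have : (2:ℝ) < 2/δ := by rw [lt_div_iff₀ hδ0]; linarith
      have := Nat.lt_ceil.mpr (by exact_mod_cast this : ((2:ℕ):ℝ) < 2/δ)
      omega
    have hcL : c < 0.6931471808 := lt_of_le_of_lt hcle hL2
    have b1 : ⌈c⌉₊ ≤ 1 := Nat.ceil_le.mpr (by push_cast; nlinarith)
    have b2 : ⌈c * 2⌉₊ ≤ 2 := Nat.ceil_le.mpr (by push_cast; nlinarith)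
    have b3 : ⌈c * 3⌉₊ ≤ 3 := Nat.ceil_le.mpr (by push_cast; nlinarith)
    have b4 : ⌈c * 4⌉₊ ≤ 3 := Nat.ceil_le.mpr (by push_cast; nlinarith)
    have hMval : M = 3 ∨ M = 4 := by omega
    rcases hMval with h3 | h4
    · have hsum : (∑ i : Fin M, ⌈c * ((i:ℕ) + 1)⌉₊) ≤ 6 := by
        rw [Fin.sum_univ_eq_sum_range (fun i => ⌈c * ((i:ℕ) + 1)⌉₊) M, h3]
        simp [Finset.sum_range_succ]
        norm_num
        omega
      have hn : ((∑ i : Fin M, ⌈c * ((i:ℕ) + 1)⌉₊ : ℕ) : ℝ) ≤ 6 := by exact_mod_cast hsum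
      have hrhs : (6:ℝ) ≤ 2 * L * t ^ 2 + 3 * (L + 1) * t - (13 / 9 * L - 1) := by
        nlinarith [sq_nonneg (t - 1), mul_pos (mul_pos (by linarith : (0:ℝ) < 2*L) ht0) ht0]
      linarith [hkey]
    · have hsum : (∑ i : Fin M, ⌈c * ((i:ℕ) + 1)⌉₊) ≤ 9 := by
        rw [Fin.sum_univ_eq_sum_range (fun i => ⌈c * ((i:ℕ) + 1)⌉₊) M, h4]
        simp [Finset.sum_range_succ]
        norm_num
        omega
      have hn : ((∑ i : Fin M, ⌈c * ((i:ℕ) + 1)⌉₊ : ℕ) : ℝ) ≤ 9 := by exact_mod_cast hsum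
      have ht32 : (3:ℝ)/2 < t := by
        have h1 : ((3:ℕ):ℝ) < 2/δ := Nat.lt_ceil.mp (by omega)
        rw [h2δ] at h1
        push_cast at h1
        linarith
      have hrhs : (9:ℝ) ≤ 2 * L * t ^ 2 + 3 * (L + 1) * t - (13 / 9 * L - 1) := by
        nlinarith [sq_nonneg (t - 3/2)]
      linarith [hkey]
end

section
/- For every d ∈ ℕ and every δ with 0 < δ < 1, the bracketing number satisfies N_{[ ]}(d, δ) ≤ max(1.1^{d-101}, 1) · (d^d / d!) · (δ^{-1} + 1)^d. -/
open Finset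

namespace BracketAux

/-- extend `k : Fin d → ℕ` by zero -/
def nk (d : ℕ) (k : Fin d → ℕ) (i : ℕ) : ℕ := if h : i < d then k ⟨i, h⟩ else 0

/-- left endpoints of the bracket indexed by `k` -/
noncomputable def Xf (d : ℕ) (δ : ℝ) (k : Fin d → ℕ) : ℕ → ℝ := fun i =>
  match i with
  | 0 => (nk d k 0 : ℝ) * (δ / d)
  | (i+1) => if nk d k i = 0 then 0 else (nk d k (i+1) : ℝ) / (nk d k i : ℝ)

/-- right endpoints of the bracket indexed by `k` -/
noncomputable def Yf (d : ℕ) (δ : ℝ) (k : Fin d → ℕ) : ℕ → ℝ := fun i =>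
  match i with
  | 0 => min (((nk d k 0 : ℝ) + 1) * (δ / d)) 1
  | (i+1) => if nk d k i = 0 then 1 else ((nk d k (i+1) : ℝ) + 1) / (nk d k i : ℝ)

/-- the index set: decreasing chains below `m` with absorbing 0 -/
def goodSet (d m : ℕ) : Finset (Fin d → ℕ) :=
  (Fintype.piFinset fun _ => Finset.range m).filter
    (fun k => ∀ i ∈ Finset.range d,
      (nk d k (i+1) + 1 ≤ nk d k i ∨ (nk d k i = 0 ∧ nk d k (i+1) = 0)))

lemma nk_lt {d m : ℕ} {k : Fin d → ℕ} (hm : 1 ≤ m) (hk : k ∈ goodSet d m) (i : ℕ) :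
    nk d k i < m := by
  rw [goodSet, mem_filter, Fintype.mem_piFinset] at hk
  unfold nk
  split
  · exact Finset.mem_range.1 (hk.1 _)
  · omega

lemma goodSet_chain {d m : ℕ} {k : Fin d → ℕ} (hk : k ∈ goodSet d m) {i : ℕ} (hi : i < d) :
    nk d k (i+1) + 1 ≤ nk d k i ∨ (nk d k i = 0 ∧ nk d k (i+1) = 0) := by
  rw [goodSet, mem_filter] at hk
  exact hk.2 i (Finset.mem_range.2 hi)

lemma nk_eq {d : ℕ} (k : Fin d → ℕ) {i : ℕ} (h : i < d) : nk d k i = k ⟨i, h⟩ :=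
  dif_pos h

lemma nk_eq_zero_of_ge {d : ℕ} (k : Fin d → ℕ) {i : ℕ} (hi : d ≤ i) : nk d k i = 0 := by
  unfold nk; split <;> omega

section Bounds

variable {d m : ℕ} {δ : ℝ} {k : Fin d → ℕ}

lemma Xf_nonneg (hδ : 0 ≤ δ) (k : Fin d → ℕ) (i : ℕ) : 0 ≤ Xf d δ k i := by
  match i with
  | 0 => exact mul_nonneg (by positivity) (by positivity)
  | (i+1) =>
    simp only [Xf]
    split
    · exact le_refl _
    · positivity

lemma Yf_le_one (k : Fin d → ℕ) {i : ℕ} (hk : k ∈ goodSet d m) : Yf d δ k i ≤ 1 := by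
  match i with
  | 0 => exact min_le_right _ _
  | (i+1) =>
    simp only [Yf]
    split
    · exact le_refl _
    · rename_i h
      have hi : i < d := by
        by_contra hi
        exact h (nk_eq_zero_of_ge k (by omega))
      have hpos : (0:ℝ) < (nk d k i : ℝ) :=
        Nat.cast_pos.mpr (Nat.pos_of_ne_zero h)
      rcases goodSet_chain hk hi with hc | hc
      · rw [div_le_one hpos]
        exact_mod_cast hc
      · exact absurd hc.1 h

lemma Xf_le_Yf (hδ : 0 ≤ δ) (hd : 0 < d) (hm1 : ((m:ℝ) - 1) * (δ / d) ≤ 1)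
    (hm : 1 ≤ m) (hk : k ∈ goodSet d m) (i : ℕ) : Xf d δ k i ≤ Yf d δ k i := by
  match i with
  | 0 =>
    simp only [Xf, Yf]
    refine le_min (mul_le_mul_of_nonneg_right (by linarith) (by positivity)) ?_
    have h0 : nk d k 0 + 1 ≤ m := nk_lt hm hk 0
    have h1 : (nk d k 0 : ℝ) + 1 ≤ (m:ℝ) := by exact_mod_cast h0
    nlinarith [div_nonneg hδ (Nat.cast_nonneg (α := ℝ) d),
      Nat.cast_nonneg (α := ℝ) (nk d k 0)]
  | (i+1) =>
    simp only [Xf, Yf]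
    split
    · rename_i h
      simp [h]
    · rename_i h
      have hpos : (0:ℝ) < (nk d k i : ℝ) :=
        Nat.cast_pos.mpr (Nat.pos_of_ne_zero h)
      exact (div_le_div_iff_of_pos_right hpos).mpr (by linarith)

/-- telescoping bound: difference of products bounded by sum of weighted increments -/
lemma prod_sub_prod_le (x y : ℕ → ℝ) (hx0 : ∀ i, 0 ≤ x i) (hxy : ∀ i, x i ≤ y i)
    (hy1 : ∀ i, y i ≤ 1) (n : ℕ) :
    (∏ i ∈ range n, y i) - ∏ i ∈ range n, x i ≤
      ∑ j ∈ range n, (∏ i ∈ range j, x i) * (y j - x j) := by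
  induction n with
  | zero => simp
  | succ n ih =>
    rw [prod_range_succ, prod_range_succ, sum_range_succ]
    have h1 : (0:ℝ) ≤ ∏ i ∈ range n, x i := prod_nonneg fun i _ => hx0 i
    have h2 : (∏ i ∈ range n, x i) ≤ ∏ i ∈ range n, y i :=
      prod_le_prod (fun i _ => hx0 i) (fun i _ => hxy i)
    have h3 : y n ≤ 1 := hy1 n
    have h4 : 0 ≤ y n := le_trans (hx0 n) (hxy n)
    nlinarith [ih]

/-- partial products of the left endpoints -/
lemma chainX (hδ : 0 ≤ δ) (k : Fin d → ℕ) (j : ℕ) :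
    (∏ i ∈ range (j+1), Xf d δ k i) ≤ (nk d k j : ℝ) * (δ / d) := by
  induction j with
  | zero => simp [Xf]
  | succ j ih =>
    rw [prod_range_succ]
    by_cases h : nk d k j = 0
    · have : Xf d δ k (j+1) = 0 := by simp [Xf, h]
      rw [this, mul_zero]
      positivity
    · have hpos : (0:ℝ) < (nk d k j : ℝ) :=
        Nat.cast_pos.mpr (Nat.pos_of_ne_zero h)
      have hX : Xf d δ k (j+1) = (nk d k (j+1) : ℝ) / (nk d k j : ℝ) := by
        simp [Xf, h]
      rw [hX]
      calc (∏ i ∈ range (j+1), Xf d δ k i) * ((nk d k (j+1) : ℝ) / (nk d k j : ℝ))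
          ≤ ((nk d k j : ℝ) * (δ / d)) * ((nk d k (j+1) : ℝ) / (nk d k j : ℝ)) := by
            apply mul_le_mul_of_nonneg_right ih (by positivity)
        _ = (δ / d) * ((nk d k j : ℝ) * ((nk d k (j+1) : ℝ) / (nk d k j : ℝ))) := by ring
        _ = (δ / d) * (nk d k (j+1) : ℝ) := by
            rw [← mul_div_assoc, mul_div_cancel_left₀ _ (ne_of_gt hpos)]
        _ = (nk d k (j+1) : ℝ) * (δ / d) := by ring

lemma measure_bound (hδ : 0 < δ) (hd : 0 < d) (hm1 : ((m:ℝ) - 1) * (δ / d) ≤ 1)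
    (hm : 1 ≤ m) (hk : k ∈ goodSet d m) :
    (∏ i ∈ range d, Yf d δ k i) - ∏ i ∈ range d, Xf d δ k i ≤ δ := by
  have hdR : (0:ℝ) < (d:ℝ) := Nat.cast_pos.mpr hd
  have key := prod_sub_prod_le (Xf d δ k) (Yf d δ k) (Xf_nonneg hδ.le k)
    (Xf_le_Yf hδ.le hd hm1 hm hk) (fun i => Yf_le_one k hk) d
  have hterm : ∀ j ∈ range d,
      (∏ i ∈ range j, Xf d δ k i) * (Yf d δ k j - Xf d δ k j) ≤ δ / d := by
    intro j _
    match j with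
    | 0 =>
      simp only [range_zero, prod_empty, one_mul, Xf, Yf]
      have h1 : min (((nk d k 0:ℝ) + 1) * (δ/d)) 1 ≤ ((nk d k 0:ℝ) + 1) * (δ/d) :=
        min_le_left _ _
      nlinarith
    | (j+1) =>
      have hA : (∏ i ∈ range (j+1), Xf d δ k i) ≤ (nk d k j : ℝ) * (δ/d) := chainX hδ.le k j
      have hA0 : (0:ℝ) ≤ ∏ i ∈ range (j+1), Xf d δ k i :=
        prod_nonneg fun i _ => Xf_nonneg hδ.le k i
      by_cases h : nk d k j = 0
      · have hAz : (∏ i ∈ range (j+1), Xf d δ k i) = 0 :=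
          le_antisymm (by simpa [h] using hA) hA0
        rw [hAz, zero_mul]
        positivity
      · have hpos : (0:ℝ) < (nk d k j : ℝ) :=
          Nat.cast_pos.mpr (Nat.pos_of_ne_zero h)
        have hYX : Yf d δ k (j+1) - Xf d δ k (j+1) = 1 / (nk d k j : ℝ) := by
          simp only [Xf, Yf]
          rw [if_neg h, if_neg h]
          field_simp
          ring
        rw [hYX]
        calc (∏ i ∈ range (j+1), Xf d δ k i) * (1 / (nk d k j:ℝ))
            ≤ ((nk d k j:ℝ) * (δ/d)) * (1/(nk d k j:ℝ)) :=
              mul_le_mul_of_nonneg_right hA (by positivity)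
          _ = δ/d := by field_simp
  have hsum : (∑ j ∈ range d, (∏ i ∈ range j, Xf d δ k i) * (Yf d δ k j - Xf d δ k j))
      ≤ δ := by
    calc _ ≤ ∑ _j ∈ range d, δ/d := sum_le_sum hterm
      _ = (d:ℝ) * (δ/d) := by rw [sum_const, card_range, nsmul_eq_mul]
      _ = δ := by field_simp
  linarith

end Bounds

section Cover

/-- extend `u` by zero -/
def uu (d : ℕ) (u : Fin d → ℝ) (i : ℕ) : ℝ := if h : i < d then u ⟨i, h⟩ else 0

/-- the chain of indices of the bracket containing `u` -/
noncomputable def Kseq (d m : ℕ) (δ : ℝ) (u : Fin d → ℝ) : ℕ → ℕ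
  | 0 => min ⌊uu d u 0 * ((d:ℝ)/δ)⌋₊ (m-1)
  | (i+1) => if Kseq d m δ u i = 0 then 0
      else min ⌊uu d u (i+1) * (Kseq d m δ u i : ℝ)⌋₊ (Kseq d m δ u i - 1)

/-- the index of the bracket containing `u` -/
noncomputable def kcov (d m : ℕ) (δ : ℝ) (u : Fin d → ℝ) : Fin d → ℕ :=
  fun j => Kseq d m δ u j

variable {d m : ℕ} {δ : ℝ} {u : Fin d → ℝ}

lemma uu_nonneg (hu : ∀ j, 0 ≤ u j) (i : ℕ) : 0 ≤ uu d u i := by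
  unfold uu; split
  · exact hu _
  · exact le_refl 0

lemma uu_le_one (hu : ∀ j, u j ≤ 1) (i : ℕ) : uu d u i ≤ 1 := by
  unfold uu; split
  · exact hu _
  · exact zero_le_one

lemma nk_kcov {i : ℕ} (hi : i < d) : nk d (kcov d m δ u) i = Kseq d m δ u i := by
  simp [nk, kcov, hi]

lemma Kseq_le (i : ℕ) : Kseq d m δ u i ≤ m - 1 := by
  induction i with
  | zero => exact min_le_right _ _
  | succ i ih =>
    rw [Kseq]
    split
    · omega
    · have := min_le_right (⌊uu d u (i+1) * (Kseq d m δ u i : ℝ)⌋₊) (Kseq d m δ u i - 1)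
      omega

lemma kcov_mem (hm : 1 ≤ m) : kcov d m δ u ∈ goodSet d m := by
  rw [goodSet, mem_filter, Fintype.mem_piFinset]
  constructor
  · intro j
    rw [mem_range]
    have := Kseq_le (d := d) (m := m) (δ := δ) (u := u) j
    simp only [kcov]
    omega
  · intro i hi
    rw [mem_range] at hi
    rw [nk_kcov hi]
    by_cases h : Kseq d m δ u i = 0
    · right
      refine ⟨h, ?_⟩
      by_cases hi1 : i + 1 < d
      · rw [nk_kcov hi1, Kseq, if_pos h]
      · exact nk_eq_zero_of_ge _ (by omega)
    · left
      by_cases hi1 : i + 1 < d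
      · rw [nk_kcov hi1, Kseq, if_neg h]
        have := min_le_right (⌊uu d u (i+1) * (Kseq d m δ u i : ℝ)⌋₊) (Kseq d m δ u i - 1)
        omega
      · rw [nk_eq_zero_of_ge _ (by omega)]
        omega

lemma kcov_cover (hδ : 0 < δ) (hd : 0 < d) (hm : 1 ≤ m)
    (hmge : (d:ℝ)/δ ≤ (m:ℝ)) (hu0 : ∀ j, 0 ≤ u j) (hu1 : ∀ j, u j ≤ 1) :
    ∀ i : ℕ, i < d →
      Xf d δ (kcov d m δ u) i ≤ uu d u i ∧ uu d u i ≤ Yf d δ (kcov d m δ u) i := by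
  have hdR : (0:ℝ) < (d:ℝ) := Nat.cast_pos.mpr hd
  have hδd : (0:ℝ) < δ / d := by positivity
  intro i hi
  match i with
  | 0 =>
    have hK0 : Kseq d m δ u 0 = min ⌊uu d u 0 * ((d:ℝ)/δ)⌋₊ (m-1) := rfl
    constructor
    · -- X ≤ u
      simp only [Xf, nk_kcov hi]
      have h1 : (Kseq d m δ u 0 : ℝ) ≤ ⌊uu d u 0 * ((d:ℝ)/δ)⌋₊ := by
        exact_mod_cast Nat.cast_le.mpr (hK0 ▸ min_le_left _ _)
      have h2 : (⌊uu d u 0 * ((d:ℝ)/δ)⌋₊ : ℝ) ≤ uu d u 0 * ((d:ℝ)/δ) :=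
        Nat.floor_le (mul_nonneg (uu_nonneg hu0 0) (by positivity))
      calc (Kseq d m δ u 0 : ℝ) * (δ/d) ≤ (uu d u 0 * ((d:ℝ)/δ)) * (δ/d) := by
            apply mul_le_mul_of_nonneg_right (le_trans h1 h2) hδd.le
        _ = uu d u 0 := by field_simp
    · -- u ≤ Y
      simp only [Yf, nk_kcov hi]
      refine le_min ?_ (uu_le_one hu1 0)
      by_cases hc : ⌊uu d u 0 * ((d:ℝ)/δ)⌋₊ ≤ m - 1
      · have hKeq : Kseq d m δ u 0 = ⌊uu d u 0 * ((d:ℝ)/δ)⌋₊ := by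
          rw [hK0, min_eq_left hc]
        have h3 : uu d u 0 * ((d:ℝ)/δ) < (Kseq d m δ u 0 : ℝ) + 1 := by
          rw [hKeq]; push_cast; exact Nat.lt_floor_add_one _
        have := mul_le_mul_of_nonneg_right h3.le hδd.le
        calc uu d u 0 = (uu d u 0 * ((d:ℝ)/δ)) * (δ/d) := by field_simp
          _ ≤ ((Kseq d m δ u 0 : ℝ) + 1) * (δ/d) := this
      · have hKeq : Kseq d m δ u 0 = m - 1 := by
          rw [hK0, min_eq_right (by omega)]
        have h4 : ((Kseq d m δ u 0 : ℝ) + 1) = (m:ℝ) := by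
          rw [hKeq]
          push_cast [Nat.cast_sub hm]
          ring
        rw [h4]
        calc uu d u 0 ≤ 1 := uu_le_one hu1 0
          _ = ((d:ℝ)/δ) * (δ/d) := by field_simp
          _ ≤ (m:ℝ) * (δ/d) := mul_le_mul_of_nonneg_right hmge hδd.le
  | (i+1) =>
    have hi0 : i < d := by omega
    by_cases h : Kseq d m δ u i = 0
    · constructor
      · simp only [Xf, nk_kcov hi0, h, if_pos]
        exact uu_nonneg hu0 (i+1)
      · simp only [Yf, nk_kcov hi0, h, if_pos]
        exact uu_le_one hu1 (i+1)
    · have hpN : 1 ≤ Kseq d m δ u i := Nat.pos_of_ne_zero h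
      have hpos : (0:ℝ) < (Kseq d m δ u i : ℝ) := by exact_mod_cast hpN
      have hKs : Kseq d m δ u (i+1)
          = min ⌊uu d u (i+1) * (Kseq d m δ u i : ℝ)⌋₊ (Kseq d m δ u i - 1) := by
        rw [Kseq, if_neg h]
      have hnk : nk d (kcov d m δ u) i ≠ 0 := by rw [nk_kcov hi0]; exact h
      constructor
      · simp only [Xf, nk_kcov hi0, nk_kcov hi, if_neg h]
        rw [div_le_iff₀ hpos]
        calc (Kseq d m δ u (i+1) : ℝ) ≤ (⌊uu d u (i+1) * (Kseq d m δ u i : ℝ)⌋₊ : ℝ) := by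
              exact_mod_cast Nat.cast_le.mpr (hKs ▸ min_le_left _ _)
          _ ≤ uu d u (i+1) * (Kseq d m δ u i : ℝ) :=
              Nat.floor_le (mul_nonneg (uu_nonneg hu0 _) hpos.le)
      · simp only [Yf, nk_kcov hi0, nk_kcov hi, if_neg h]
        rw [le_div_iff₀ hpos]
        by_cases hc : ⌊uu d u (i+1) * (Kseq d m δ u i : ℝ)⌋₊ ≤ Kseq d m δ u i - 1
        · have hKeq : Kseq d m δ u (i+1) = ⌊uu d u (i+1) * (Kseq d m δ u i : ℝ)⌋₊ := by
            rw [hKs, min_eq_left hc]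
          have h3 : uu d u (i+1) * (Kseq d m δ u i : ℝ) < (Kseq d m δ u (i+1) : ℝ) + 1 := by
            rw [hKeq]; push_cast; exact Nat.lt_floor_add_one _
          exact h3.le
        · have hKeq : Kseq d m δ u (i+1) = Kseq d m δ u i - 1 := by
            rw [hKs, min_eq_right (by omega)]
          have h4 : ((Kseq d m δ u (i+1) : ℝ) + 1) = (Kseq d m δ u i : ℝ) := by
            rw [hKeq]
            push_cast [Nat.cast_sub hpN]
            ring
          rw [h4]
          calc uu d u (i+1) * (Kseq d m δ u i : ℝ) ≤ 1 * (Kseq d m δ u i : ℝ) :=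
              mul_le_mul_of_nonneg_right (uu_le_one hu1 _) hpos.le
            _ = (Kseq d m δ u i : ℝ) := one_mul _

end Cover

section Count

/-- reversed and shifted chain, a strictly monotone map -/
def psi (d : ℕ) (k : Fin d → ℕ) (j : Fin d) : ℕ :=
  k ⟨d - 1 - j.val, by have := j.isLt; omega⟩ + j.val

variable {d m : ℕ}

lemma psi_strictMono {k : Fin d → ℕ} (hk : k ∈ goodSet d m) : StrictMono (psi d k) := by
  rcases Nat.eq_zero_or_pos d with rfl | hd0
  · exact fun a => absurd a.isLt (by omega)
  obtain ⟨n, rfl⟩ : ∃ n, d = n + 1 := ⟨d - 1, by omega⟩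
  rw [Fin.strictMono_iff_lt_succ]
  intro j
  have hj1 : (j:ℕ) + 1 < n + 1 := by have := j.isLt; omega
  have h2 : n + 1 - 1 - ((j:ℕ)+1) + 1 = n + 1 - 1 - (j:ℕ) := by omega
  have hA : psi (n+1) k j.castSucc = nk (n+1) k (n + 1 - 1 - (j:ℕ)) + (j:ℕ) := by
    have h := nk_eq k (show n + 1 - 1 - (j:ℕ) < n + 1 by omega)
    simp only [psi, Fin.coe_castSucc, h]
  have hB : psi (n+1) k j.succ = nk (n+1) k (n + 1 - 1 - ((j:ℕ)+1)) + ((j:ℕ)+1) := by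
    have h := nk_eq k (show n + 1 - 1 - ((j:ℕ)+1) < n + 1 by omega)
    simp only [psi, Fin.val_succ, h]
  have hcond := goodSet_chain hk (i := n + 1 - 1 - ((j:ℕ)+1)) (by omega)
  rw [h2] at hcond
  rw [hA, hB]
  omega

lemma card_goodSet_le (hd : 1 ≤ d) (hm : 1 ≤ m) :
    (goodSet d m).card ≤ (m + d - 1).choose d := by
  classical
  have hcard : ∀ k : Fin d → ℕ, k ∈ goodSet d m →
      (Finset.image (psi d k) Finset.univ).card = d := by
    intro k hk
    rw [card_image_of_injective _ (psi_strictMono hk).injective, card_univ,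
      Fintype.card_fin]
  have hmaps : ∀ k ∈ goodSet d m,
      Finset.image (psi d k) Finset.univ ∈ (range (m + d - 1)).powersetCard d := by
    intro k hk
    rw [mem_powersetCard]
    refine ⟨fun a ha => ?_, hcard k hk⟩
    obtain ⟨j, _, rfl⟩ := mem_image.1 ha
    rw [mem_range]
    have h1 : nk d k (d - 1 - (j:ℕ)) < m := nk_lt hm hk _
    rw [nk_eq k (show d - 1 - (j:ℕ) < d by have := j.isLt; omega)] at h1
    have hjd := j.isLt
    simp only [psi]
    omega
  have hinj : Set.InjOn (fun k => Finset.image (psi d k) Finset.univ)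
      ↑(goodSet d m) := by
    intro k1 h1 k2 h2 he
    simp only at he
    have hc1 := hcard k1 h1
    have e1 := orderEmbOfFin_unique hc1
      (fun x => mem_image_of_mem _ (mem_univ x)) (psi_strictMono h1)
    have e2 := orderEmbOfFin_unique hc1
      (f := psi d k2) (fun x => by rw [he]; exact mem_image_of_mem _ (mem_univ x))
      (psi_strictMono h2)
    have hpsi : psi d k1 = psi d k2 := e1.trans e2.symm
    funext i
    have hil := i.isLt
    have hfi : d - 1 - (d - 1 - (i:ℕ)) = (i:ℕ) := by omega
    have hkey := congrFun hpsi ⟨d - 1 - (i:ℕ), by omega⟩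
    simp only [psi] at hkey
    have hi2 : (⟨d - 1 - (d - 1 - (i:ℕ)), by omega⟩ : Fin d) = i := Fin.ext hfi
    rw [hi2] at hkey
    omega
  have := Finset.card_le_card_of_injOn _ hmaps hinj
  rwa [card_powersetCard, card_range] at this

end Count

end BracketAux

theorem bracketing_number_general (d : ℕ) (hd : 1 ≤ d)
    (δ : ℝ) (hδ0 : 0 < δ) (hδ1 : δ < 1) :
    (bracketingNumber d δ : ℝ) ≤
      max ((1.1 : ℝ) ^ ((d : ℤ) - 101)) 1 *
        ((d : ℝ) ^ d / (Nat.factorial d : ℝ)) * (δ⁻¹ + 1) ^ d := by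
  classical
  have hdR : (0:ℝ) < (d:ℝ) := by exact_mod_cast hd
  set m : ℕ := ⌈(d:ℝ)/δ⌉₊ with hmdef
  have hq : (0:ℝ) < (d:ℝ)/δ := by positivity
  have hm : 1 ≤ m := Nat.ceil_pos.mpr hq
  have hmge : (d:ℝ)/δ ≤ (m:ℝ) := Nat.le_ceil _
  have hmlt : (m:ℝ) < (d:ℝ)/δ + 1 := Nat.ceil_lt_add_one hq.le
  have hm1 : ((m:ℝ) - 1) * (δ/d) ≤ 1 := by
    have h : ((m:ℝ)-1) ≤ (d:ℝ)/δ := by linarith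
    calc ((m:ℝ)-1)*(δ/d) ≤ ((d:ℝ)/δ)*(δ/d) :=
          mul_le_mul_of_nonneg_right h (by positivity)
      _ = 1 := by field_simp
  set n : ℕ := (BracketAux.goodSet d m).card with hndef
  -- the bracketing number is at most the cardinality of the good set
  have hmem : bracketingNumber d δ ≤ n := by
    apply Nat.sInf_le
    set e := (BracketAux.goodSet d m).equivFin.symm with he
    refine ⟨fun i j => BracketAux.Xf d δ (e i).1 j.val,
            fun i j => BracketAux.Yf d δ (e i).1 j.val, ?_, ?_⟩
    · intro i
      have hk := (e i).2
      refine ⟨Set.mem_Icc.mpr ⟨fun j => BracketAux.Xf_nonneg hδ0.le _ _,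
          fun j => le_trans (BracketAux.Xf_le_Yf hδ0.le hd hm1 hm hk _)
            (BracketAux.Yf_le_one _ hk)⟩,
        Set.mem_Icc.mpr ⟨fun j => BracketAux.Xf_le_Yf hδ0.le hd hm1 hm hk _,
          fun j => BracketAux.Yf_le_one _ hk⟩, ?_⟩
      rw [Fin.prod_univ_eq_prod_range, Fin.prod_univ_eq_prod_range]
      exact BracketAux.measure_bound hδ0 hd hm1 hm hk
    · intro u hu
      rw [Set.mem_Icc] at hu
      have hu0 : ∀ j, 0 ≤ u j := fun j => hu.1 j
      have hu1 : ∀ j, u j ≤ 1 := fun j => hu.2 j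
      have hmemk := BracketAux.kcov_mem (d := d) (m := m) (δ := δ) (u := u) hm
      have hcov := BracketAux.kcov_cover hδ0 hd hm hmge hu0 hu1
      have huu : ∀ j : Fin d, BracketAux.uu d u j.val = u j := fun j => by
        simp [BracketAux.uu, j.isLt]
      rw [Set.mem_iUnion]
      refine ⟨e.symm ⟨BracketAux.kcov d m δ u, hmemk⟩, ?_⟩
      have hee : e (e.symm ⟨BracketAux.kcov d m δ u, hmemk⟩)
          = ⟨BracketAux.kcov d m δ u, hmemk⟩ := e.apply_symm_apply _
      rw [Set.mem_Icc]
      constructor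
      · intro j
        simp only [hee]
        rw [← huu j]
        exact (hcov j.val j.isLt).1
      · intro j
        simp only [hee]
        rw [← huu j]
        exact (hcov j.val j.isLt).2
  have hcount : n ≤ (m + d - 1).choose d := BracketAux.card_goodSet_le hd hm
  have hfact : (0:ℝ) < (Nat.factorial d : ℝ) := by
    exact_mod_cast d.factorial_pos
  have h1 : (((m + d - 1).choose d : ℕ) : ℝ)
      ≤ ((m + d - 1 : ℕ) : ℝ)^d / (Nat.factorial d : ℝ) := by
    rw [le_div_iff₀ hfact]
    have hnat : (m + d - 1).choose d * Nat.factorial d ≤ (m + d - 1)^d := by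
      calc (m + d - 1).choose d * Nat.factorial d
          = Nat.factorial d * (m + d - 1).choose d := Nat.mul_comm _ _
        _ = (m + d - 1).descFactorial d :=
            (Nat.descFactorial_eq_factorial_mul_choose _ _).symm
        _ ≤ (m + d - 1)^d := Nat.descFactorial_le_pow _ _
    exact_mod_cast hnat
  have h2 : ((m + d - 1 : ℕ) : ℝ) ≤ (d:ℝ)/δ + (d:ℝ) := by
    have hcast : ((m + d - 1 : ℕ) : ℝ) = (m:ℝ) + (d:ℝ) - 1 := by
      push_cast [Nat.cast_sub (show 1 ≤ m + d by omega)]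
      ring
    rw [hcast]
    linarith
  have h3 : (((m + d - 1 : ℕ)):ℝ)^d ≤ ((d:ℝ)/δ + (d:ℝ))^d :=
    pow_le_pow_left₀ (Nat.cast_nonneg _) h2 d
  have h4 : ((d:ℝ)/δ + (d:ℝ))^d = (d:ℝ)^d * (δ⁻¹+1)^d := by
    rw [← mul_pow]
    congr 1
    rw [div_eq_mul_inv]
    ring
  have hmax : (1:ℝ) ≤ max ((1.1:ℝ)^((d:ℤ)-101)) 1 := le_max_right _ _
  have hnn : (0:ℝ) ≤ ((d:ℝ)^d / (Nat.factorial d : ℝ)) * (δ⁻¹+1)^d := by positivity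
  calc (bracketingNumber d δ : ℝ) ≤ (n:ℝ) := Nat.cast_le.mpr hmem
    _ ≤ (((m + d - 1).choose d : ℕ) : ℝ) := Nat.cast_le.mpr hcount
    _ ≤ ((m + d - 1 : ℕ) : ℝ)^d / (Nat.factorial d : ℝ) := h1
    _ ≤ ((d:ℝ)/δ + (d:ℝ))^d / (Nat.factorial d : ℝ) := by
        apply div_le_div_of_nonneg_right h3 hfact.le
    _ = ((d:ℝ)^d / (Nat.factorial d : ℝ)) * (δ⁻¹+1)^d := by
        rw [h4]; ring
    _ ≤ max ((1.1:ℝ)^((d:ℤ)-101)) 1 *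
        ((d:ℝ)^d / (Nat.factorial d : ℝ)) * (δ⁻¹+1)^d := by
        nlinarith [hmax, hnn]
end

section
/- For fixed d ∈ ℕ, the function f(k) = d!/(d^{k-1}·(d-k+1)!) · (k/12 + 1/2), defined for natural numbers 1 ≤ k ≤ d, attains its maximum at k = −3 + ⌈√(16+d)⌉. -/
noncomputable def fAux (d k : ℕ) : ℝ :=
  (Nat.factorial d : ℝ) / ((d : ℝ) ^ (k - 1) * (Nat.factorial (d - k + 1) : ℝ))
    * ((k : ℝ) / 12 + 1 / 2)

lemma fAux_succ_ge (d k : ℕ) (hk : 1 ≤ k) (hkd : k ≤ d)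
    (h : k ^ 2 + 6 * k ≤ d + 6) : fAux d k ≤ fAux d (k + 1) := by
  obtain ⟨e, rfl⟩ : ∃ e, d = k + e := ⟨d - k, by omega⟩
  unfold fAux
  have h1 : k + e - k + 1 = e + 1 := by omega
  have h2 : Nat.factorial (k + e - (k + 1) + 1) = Nat.factorial e := by
    rcases Nat.eq_zero_or_pos e with he | he
    · subst he; norm_num
    · congr 1; omega
  have h3 : (k + 1) - 1 = k := by omega
  rw [h1, h2, h3]
  have hD : (0:ℝ) < ((k + e : ℕ) : ℝ) := by
    have : 0 < k + e := by omega
    exact_mod_cast this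
  have hE : (0:ℝ) < (Nat.factorial e : ℝ) := by exact_mod_cast (Nat.factorial_pos e)
  have hE1 : (0:ℝ) < (Nat.factorial (e + 1) : ℝ) := by exact_mod_cast (Nat.factorial_pos (e+1))
  have hP : (0:ℝ) < ((k + e : ℕ) : ℝ) ^ (k - 1) := pow_pos hD _
  rw [div_mul_eq_mul_div, div_mul_eq_mul_div,
    div_le_div_iff₀ (by positivity) (by positivity)]
  have hpow : ((k + e : ℕ) : ℝ) ^ k = ((k + e : ℕ) : ℝ) ^ (k - 1) * ((k + e : ℕ) : ℝ) := by
    rw [← pow_succ]; congr 1; omega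
  have hfac : (Nat.factorial (e + 1) : ℝ) = ((e : ℝ) + 1) * (Nat.factorial e : ℝ) := by
    rw [Nat.factorial_succ]; push_cast; ring
  rw [hpow, hfac]
  have key : ((k : ℝ) + 6) * ((k : ℕ) + (e : ℕ) : ℕ) ≤ ((k : ℝ) + 7) * ((e : ℝ) + 1) := by
    have keyn : (k + 6) * (k + e) ≤ (k + 7) * (e + 1) := by nlinarith
    have := (Nat.cast_le (α := ℝ)).2 keyn
    push_cast at this ⊢
    linarith
  have C0 : (0:ℝ) ≤ (Nat.factorial (k + e) : ℝ) * (((k + e : ℕ) : ℝ) ^ (k - 1) * (Nat.factorial e : ℝ)) / 12 := by positivity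
  have := mul_le_mul_of_nonneg_left key C0
  push_cast at this ⊢
  nlinarith [this]

lemma fAux_succ_le (d k : ℕ) (hk : 1 ≤ k) (hkd : k ≤ d)
    (h : d + 7 ≤ k ^ 2 + 6 * k) : fAux d (k + 1) ≤ fAux d k := by
  obtain ⟨e, rfl⟩ : ∃ e, d = k + e := ⟨d - k, by omega⟩
  unfold fAux
  have h1 : k + e - k + 1 = e + 1 := by omega
  have h2 : Nat.factorial (k + e - (k + 1) + 1) = Nat.factorial e := by
    rcases Nat.eq_zero_or_pos e with he | he
    · subst he; norm_num
    · congr 1; omega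
  have h3 : (k + 1) - 1 = k := by omega
  rw [h1, h2, h3]
  have hD : (0:ℝ) < ((k + e : ℕ) : ℝ) := by
    have : 0 < k + e := by omega
    exact_mod_cast this
  have hE : (0:ℝ) < (Nat.factorial e : ℝ) := by exact_mod_cast (Nat.factorial_pos e)
  have hE1 : (0:ℝ) < (Nat.factorial (e + 1) : ℝ) := by exact_mod_cast (Nat.factorial_pos (e+1))
  have hP : (0:ℝ) < ((k + e : ℕ) : ℝ) ^ (k - 1) := pow_pos hD _
  rw [div_mul_eq_mul_div, div_mul_eq_mul_div,
    div_le_div_iff₀ (by positivity) (by positivity)]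
  have hpow : ((k + e : ℕ) : ℝ) ^ k = ((k + e : ℕ) : ℝ) ^ (k - 1) * ((k + e : ℕ) : ℝ) := by
    rw [← pow_succ]; congr 1; omega
  have hfac : (Nat.factorial (e + 1) : ℝ) = ((e : ℝ) + 1) * (Nat.factorial e : ℝ) := by
    rw [Nat.factorial_succ]; push_cast; ring
  rw [hpow, hfac]
  have key : ((k : ℝ) + 7) * ((e : ℝ) + 1) ≤ ((k : ℝ) + 6) * ((k : ℕ) + (e : ℕ) : ℕ) := by
    have keyn : (k + 7) * (e + 1) ≤ (k + 6) * (k + e) := by nlinarith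
    have := (Nat.cast_le (α := ℝ)).2 keyn
    push_cast at this ⊢
    linarith
  have C0 : (0:ℝ) ≤ (Nat.factorial (k + e) : ℝ) * (((k + e : ℕ) : ℝ) ^ (k - 1) * (Nat.factorial e : ℝ)) / 12 := by positivity
  have := mul_le_mul_of_nonneg_left key C0
  push_cast at this ⊢
  nlinarith [this]

lemma fAux_chain_up (d : ℕ) : ∀ b a : ℕ, 1 ≤ a → a ≤ b →
    (∀ j, a ≤ j → j < b → j ≤ d ∧ j ^ 2 + 6 * j ≤ d + 6) →
    fAux d a ≤ fAux d b := by
  intro b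
  induction b with
  | zero => intro a ha hab _; exact absurd hab (by omega)
  | succ n ih =>
    intro a ha hab H
    rcases eq_or_lt_of_le hab with h | h
    · rw [h]
    · have han : a ≤ n := by omega
      have hn := H n han (by omega)
      calc fAux d a ≤ fAux d n := ih a ha han (fun j hj1 hj2 => H j hj1 (by omega))
        _ ≤ fAux d (n + 1) := fAux_succ_ge d n (by omega) hn.1 hn.2

lemma fAux_chain_down (d : ℕ) : ∀ b a : ℕ, 1 ≤ a → a ≤ b →
    (∀ j, a ≤ j → j < b → j ≤ d ∧ d + 7 ≤ j ^ 2 + 6 * j) →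
    fAux d b ≤ fAux d a := by
  intro b
  induction b with
  | zero => intro a ha hab _; exact absurd hab (by omega)
  | succ n ih =>
    intro a ha hab H
    rcases eq_or_lt_of_le hab with h | h
    · rw [h]
    · have han : a ≤ n := by omega
      have hn := H n han (by omega)
      calc fAux d (n + 1) ≤ fAux d n := fAux_succ_le d n (by omega) hn.1 hn.2
        _ ≤ fAux d a := ih a ha han (fun j hj1 hj2 => H j hj1 (by omega))

/-- The function `f(k) = d!/(d^{k-1}(d-k+1)!) (k/12 + 1/2)` attains its
maximum over `1 ≤ k ≤ d` at `k = -3 + ⌈√(16+d)⌉`. -/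
theorem f_max_at_ceil_sqrt (d : ℕ) (hd : 1 ≤ d) (k : ℕ) (hk1 : 1 ≤ k)
    (hkd : k ≤ d) :
    (Nat.factorial d : ℝ) / ((d : ℝ) ^ (k - 1) * (Nat.factorial (d - k + 1) : ℝ))
        * ((k : ℝ) / 12 + 1 / 2) ≤
      (Nat.factorial d : ℝ) /
          ((d : ℝ) ^ ((⌈Real.sqrt (16 + d)⌉₊ - 3) - 1) *
            (Nat.factorial (d - (⌈Real.sqrt (16 + d)⌉₊ - 3) + 1) : ℝ))
        * (((⌈Real.sqrt (16 + d)⌉₊ - 3 : ℕ) : ℝ) / 12 + 1 / 2) := by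
  set x : ℝ := Real.sqrt (16 + d) with hxdef
  set m : ℕ := ⌈x⌉₊ - 3 with hmdef
  show fAux d k ≤ fAux d m
  have hx0 : (0:ℝ) ≤ 16 + d := by positivity
  have hxnn : 0 ≤ x := Real.sqrt_nonneg _
  have hxsq : x ^ 2 = 16 + d := Real.sq_sqrt hx0
  have hceil5 : 5 ≤ ⌈x⌉₊ := by
    have : (4:ℕ) < ⌈x⌉₊ := by
      rw [Nat.lt_ceil]
      have hd1 : (1:ℝ) ≤ d := by exact_mod_cast hd
      push_cast
      nlinarith
    omega
  have hm2 : 2 ≤ m := by omega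
  have hmd1 : m ≤ d + 1 := by
    have : ⌈x⌉₊ ≤ d + 4 := by
      rw [Nat.ceil_le]
      push_cast
      nlinarith
    omega
  rcases le_total k m with hkm | hmk
  · refine fAux_chain_up d m k hk1 hkm (fun j hj1 hj2 => ?_) 
    constructor
    · omega
    · have hj3 : ((j : ℝ) + 3) < x := by
        have : (j + 3 : ℕ) < ⌈x⌉₊ := by omega
        have := Nat.lt_ceil.mp this
        push_cast at this
        linarith
      have hr : ((j : ℝ) ^ 2 + 6 * j) < (d : ℝ) + 7 := by nlinarith
      have hn : j ^ 2 + 6 * j < d + 7 := by exact_mod_cast hr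
      omega
  · refine fAux_chain_down d k m (by omega) hmk (fun j hj1 hj2 => ?_)
    constructor
    · omega
    · have hj3 : x ≤ (j : ℝ) + 3 := by
        have : ⌈x⌉₊ ≤ j + 3 := by omega
        have := Nat.ceil_le.mp this
        push_cast at this
        linarith
      have hr : (d : ℝ) + 7 ≤ (j : ℝ) ^ 2 + 6 * j := by nlinarith
      exact_mod_cast hr
end

section
/- For fixed d ∈ ℕ, if g_d(k) = d!/(d^{k-1}·(d-k+1)!) · (k/12 + 1/2 + 1/(k+1)) for natural numbers 1 ≤ k ≤ d, then any maximizer k_max of g_d satisfies k_max ≤ min(−3 + ⌈√(16+d)⌉, 1 + ⌈0.0544·d⌉). -/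
lemma natpoly (m : ℕ) : 6192*m^2 + 208*m < 544*m^3 + 120000 := by
  rcases le_or_gt m 12 with h | h
  · interval_cases m <;> norm_num
  · nlinarith [h, sq_nonneg m]

lemma descend (d m : ℕ) (h3 : 3 ≤ m) (hmd : m ≤ d)
    (hpoly : (d:ℝ)*((m:ℝ)^2+(m:ℝ)-12) < ((m:ℝ)-2)*(m:ℝ)*((m:ℝ)^2+7*(m:ℝ)+18)) :
    (Nat.factorial d : ℝ) /
          ((d : ℝ) ^ (m - 1) * (Nat.factorial (d - m + 1) : ℝ))
        * ((m : ℝ) / 12 + 1 / 2 + 1 / ((m : ℝ) + 1)) <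
    (Nat.factorial d : ℝ) /
          ((d : ℝ) ^ (m - 1 - 1) * (Nat.factorial (d - (m - 1) + 1) : ℝ))
        * (((m - 1 : ℕ) : ℝ) / 12 + 1 / 2 + 1 / (((m - 1 : ℕ) : ℝ) + 1)) := by
  have hm3R : (3:ℝ) ≤ (m:ℝ) := by exact_mod_cast h3
  have hdR : (3:ℝ) ≤ (d:ℝ) := by exact_mod_cast le_trans h3 hmd
  have hmdR : (m:ℝ) ≤ (d:ℝ) := by exact_mod_cast hmd
  have e1 : m - 1 - 1 = m - 2 := by omega
  have e2 : d - (m-1) + 1 = (d - m + 1) + 1 := by omega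
  have c1 : ((m-1:ℕ):ℝ) = (m:ℝ) - 1 := by
    rw [Nat.cast_sub (by omega : 1 ≤ m), Nat.cast_one]
  have e3 : m - 1 = (m - 2) + 1 := by omega
  have cdm : ((d - m + 1 : ℕ):ℝ) = (d:ℝ) - (m:ℝ) + 1 := by
    rw [Nat.cast_add, Nat.cast_sub hmd, Nat.cast_one]
  have hfactR : ((Nat.factorial ((d - m + 1) + 1)) : ℝ) =
      ((((d - m + 1 : ℕ)) : ℝ) + 1) * ((Nat.factorial (d - m + 1)) : ℝ) := by
    rw [Nat.factorial_succ]; push_cast; ring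
  rw [e1, e2, c1, e3, pow_succ, hfactR, cdm]
  have hF : (0:ℝ) < (Nat.factorial (d-m+1) : ℝ) := by
    exact_mod_cast Nat.factorial_pos _
  have hA : (0:ℝ) < (Nat.factorial d : ℝ) := by exact_mod_cast Nat.factorial_pos _
  have hd0 : (0:ℝ) < (d:ℝ) := by linarith
  have hB : (0:ℝ) < (d:ℝ)^(m-2) := pow_pos hd0 _
  have hc : (0:ℝ) < (d:ℝ) - (m:ℝ) + 1 + 1 := by linarith
  have hm0 : (0:ℝ) < (m:ℝ) := by linarith
  have key : ((d:ℝ) - (m:ℝ) + 1 + 1) * ((m : ℝ) / 12 + 1 / 2 + 1 / ((m : ℝ) + 1)) <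
      (d:ℝ) * (((m:ℝ) - 1) / 12 + 1 / 2 + 1 / ((m:ℝ) - 1 + 1)) := by
    rw [show (m:ℝ) - 1 + 1 = (m:ℝ) by ring]
    have h12 : (0:ℝ) < 12*(m:ℝ)*((m:ℝ)+1) :=
      mul_pos (mul_pos (by norm_num) hm0) (by linarith)
    rw [← mul_lt_mul_iff_of_pos_right h12]
    have q1 : ((d:ℝ) - (m:ℝ) + 1 + 1) * ((m : ℝ) / 12 + 1 / 2 + 1 / ((m : ℝ) + 1)) *
        (12*(m:ℝ)*((m:ℝ)+1)) = ((d:ℝ) - (m:ℝ) + 2)*(m:ℝ)*((m:ℝ)^2+7*(m:ℝ)+18) := by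
      field_simp
      ring
    have q2 : (d:ℝ) * (((m:ℝ) - 1) / 12 + 1 / 2 + 1 / (m:ℝ)) * (12*(m:ℝ)*((m:ℝ)+1)) =
        (d:ℝ)*((m:ℝ)+1)*((m:ℝ)^2+5*(m:ℝ)+12) := by
      field_simp
      ring
    rw [q1, q2]
    nlinarith [hpoly]
  rw [div_mul_eq_mul_div, div_mul_eq_mul_div,
    div_lt_div_iff₀ (mul_pos (mul_pos hB hd0) hF) (mul_pos hB (mul_pos hc hF))]
  nlinarith [mul_lt_mul_of_pos_left key (mul_pos (mul_pos hA hB) hF)]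


/-- Any maximizer of `g_d(k) = d!/(d^{k-1}(d-k+1)!)(k/12 + 1/2 + 1/(k+1))`
over `1 ≤ k ≤ d` satisfies
`k_max ≤ min(-3 + ⌈√(16+d)⌉, 1 + ⌈0.0544 d⌉)`. -/
theorem g_maximizer_bound (d : ℕ) (hd : 1 ≤ d) (kmax : ℕ)
    (hk1 : 1 ≤ kmax) (hkd : kmax ≤ d)
    (hmax : ∀ k : ℕ, 1 ≤ k → k ≤ d →
      (Nat.factorial d : ℝ) /
          ((d : ℝ) ^ (k - 1) * (Nat.factorial (d - k + 1) : ℝ))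
        * ((k : ℝ) / 12 + 1 / 2 + 1 / ((k : ℝ) + 1)) ≤
      (Nat.factorial d : ℝ) /
          ((d : ℝ) ^ (kmax - 1) * (Nat.factorial (d - kmax + 1) : ℝ))
        * ((kmax : ℝ) / 12 + 1 / 2 + 1 / ((kmax : ℝ) + 1))) :
    kmax ≤ min (⌈Real.sqrt (16 + d)⌉₊ - 3) (1 + ⌈(0.0544 : ℝ) * d⌉₊) := by
  have hd1 : (1:ℝ) ≤ (d:ℝ) := by exact_mod_cast hd
  refine le_min ?_ ?_
  · by_contra hc
    push_neg at hc
    have hceil5 : 5 ≤ ⌈Real.sqrt (16 + (d:ℝ))⌉₊ := by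
      have h16 : ((4:ℕ):ℝ) < Real.sqrt (16 + (d:ℝ)) := by
        have : ((4:ℕ):ℝ) = Real.sqrt 16 := by
          rw [show (16:ℝ) = 4^2 by norm_num, Real.sqrt_sq (by norm_num)]; norm_num
        rw [this]
        exact Real.sqrt_lt_sqrt (by norm_num) (by linarith)
      have := Nat.lt_ceil.mpr h16
      omega
    have hm3 : 3 ≤ kmax := by omega
    have hcl : ⌈Real.sqrt (16 + (d:ℝ))⌉₊ ≤ kmax + 2 := by omega
    have hsq : Real.sqrt (16 + (d:ℝ)) ≤ (kmax:ℝ) + 2 := by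
      have h := Nat.ceil_le.mp hcl
      push_cast at h
      linarith
    have hdle : (16:ℝ) + (d:ℝ) ≤ ((kmax:ℝ)+2)^2 := by
      have h0 : (0:ℝ) ≤ 16 + (d:ℝ) := by linarith
      calc (16:ℝ) + (d:ℝ) = Real.sqrt (16 + (d:ℝ))^2 := (Real.sq_sqrt h0).symm
        _ ≤ ((kmax:ℝ)+2)^2 := pow_le_pow_left₀ (Real.sqrt_nonneg _) hsq 2
    have hm3R : (3:ℝ) ≤ (kmax:ℝ) := by exact_mod_cast hm3
    have hpoly : (d:ℝ)*((kmax:ℝ)^2+(kmax:ℝ)-12) <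
        ((kmax:ℝ)-2)*(kmax:ℝ)*((kmax:ℝ)^2+7*(kmax:ℝ)+18) := by
      have hX : (0:ℝ) ≤ (kmax:ℝ)^2+(kmax:ℝ)-12 := by nlinarith
      nlinarith [mul_nonneg (show (0:ℝ) ≤ (kmax:ℝ)^2+4*(kmax:ℝ)-12-(d:ℝ) by linarith) hX,
        mul_pos (show (0:ℝ) < (kmax:ℝ)-2 by linarith)
          (show (0:ℝ) < 24*(kmax:ℝ)+72 by linarith)]
    exact absurd (hmax (kmax-1) (by omega) (by omega))
      (not_le.mpr (descend d kmax hm3 hkd hpoly))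
  · by_contra hc
    push_neg at hc
    have hcpos : 1 ≤ ⌈(0.0544:ℝ)*d⌉₊ := by
      have := Nat.ceil_pos.mpr (show (0:ℝ) < 0.0544*(d:ℝ) by nlinarith)
      omega
    have hm3 : 3 ≤ kmax := by omega
    have hcl : ⌈(0.0544:ℝ)*d⌉₊ ≤ kmax - 2 := by omega
    have h2 : (0.0544:ℝ)*d ≤ ((kmax - 2 : ℕ):ℝ) := Nat.ceil_le.mp hcl
    rw [Nat.cast_sub (by omega : 2 ≤ kmax)] at h2
    push_cast at h2
    have hm3R : (3:ℝ) ≤ (kmax:ℝ) := by exact_mod_cast hm3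
    have hnp : (6192:ℝ)*(kmax:ℝ)^2+208*(kmax:ℝ) < 544*(kmax:ℝ)^3+120000 := by
      exact_mod_cast natpoly kmax
    have hpoly : (d:ℝ)*((kmax:ℝ)^2+(kmax:ℝ)-12) <
        ((kmax:ℝ)-2)*(kmax:ℝ)*((kmax:ℝ)^2+7*(kmax:ℝ)+18) := by
      have hX : (0:ℝ) ≤ (kmax:ℝ)^2+(kmax:ℝ)-12 := by nlinarith
      nlinarith [mul_nonneg (show (0:ℝ) ≤ 10000*((kmax:ℝ)-2) - 544*(d:ℝ) by linarith) hX,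
        mul_pos (show (0:ℝ) < (kmax:ℝ)-2 by linarith)
          (show (0:ℝ) < 544*(kmax:ℝ)^3+120000-6192*(kmax:ℝ)^2-208*(kmax:ℝ) by linarith)]
    exact absurd (hmax (kmax-1) (by omega) (by omega))
      (not_le.mpr (descend d kmax hm3 hkd hpoly))
end

section
/- Let X be a random variable with 0 ≤ X ≤ 1 almost surely, and suppose there are constants α, β > 0 and d, N ∈ ℕ with β·d ≤ α·N such that for all c > 0, P(X ≤ c·√(d/N)) ≥ 1 − exp(−(α·c² − β)·d). Then E[X] ≤ √(β/α)·(1 + 1/(2βd))·√(d/N). -/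
open MeasureTheory

/-- Bound on the expectation of a `[0,1]`-valued random variable given a
sub-Gaussian type probabilistic bound. -/
theorem expectation_bound_from_tail {Ω : Type*} [MeasurableSpace Ω]
    (μ : Measure Ω) [IsProbabilityMeasure μ]
    (X : Ω → ℝ) (hX : Measurable X) (hX01 : ∀ ω, X ω ∈ Set.Icc (0 : ℝ) 1)
    (α β : ℝ) (hα : 0 < α) (hβ : 0 < β)
    (d N : ℕ) (hd : 0 < d) (hN : 0 < N) (hβd : β * d ≤ α * N)
    (htail : ∀ c : ℝ, 0 < c →
      (μ {ω | X ω ≤ c * Real.sqrt ((d : ℝ) / N)}).toReal ≥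
        1 - Real.exp (-(α * c ^ 2 - β) * d)) :
    ∫ ω, X ω ∂μ ≤
      Real.sqrt (β / α) * (1 + 1 / (2 * β * d)) * Real.sqrt ((d : ℝ) / N) := by
  have hdpos : (0 : ℝ) < d := by exact_mod_cast hd
  have hNpos : (0 : ℝ) < N := by exact_mod_cast hN
  set s : ℝ := Real.sqrt ((d : ℝ) / N) with hs_def
  have hs : 0 < s := Real.sqrt_pos.2 (by positivity)
  have hs2 : s ^ 2 = (d : ℝ) / N := Real.sq_sqrt (by positivity)
  set b : ℝ := α * N with hb_def
  have hb : 0 < b := by positivity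
  set A : ℝ := Real.sqrt (β / α) * s with hA_def
  have hA : 0 < A := by
    have : (0:ℝ) < Real.sqrt (β / α) := Real.sqrt_pos.2 (by positivity)
    positivity
  have hA2 : b * A ^ 2 = β * d := by
    have hc2 : Real.sqrt (β / α) ^ 2 = β / α := Real.sq_sqrt (by positivity)
    rw [hA_def, mul_pow, hc2, hs2, hb_def]
    field_simp
  set g : ℝ → ℝ := fun t => (μ {a | t < X a}).toReal with hg_def
  have hg_nonneg : ∀ t, 0 ≤ g t := fun t => ENNReal.toReal_nonneg
  have hg_le_one : ∀ t, g t ≤ 1 := by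
    intro t
    have := prob_le_one (μ := μ) (s := {a | t < X a})
    simpa [hg_def] using ENNReal.toReal_le_of_le_ofReal zero_le_one (by simpa using this)
  have hg_anti : Antitone g := by
    intro t t' htt'
    exact ENNReal.toReal_mono (measure_ne_top μ _)
      (measure_mono (fun a ha => lt_of_le_of_lt htt' ha))
  -- tail bound on g
  have hg_tail : ∀ t : ℝ, 0 < t → g t ≤ Real.exp (β * d) * Real.exp (-b * t ^ 2) := by
    intro t ht
    have hc : 0 < t / s := by positivity
    have htc : (t / s) * s = t := div_mul_cancel₀ t hs.ne'
    have h1 := htail (t / s) hc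
    rw [htc] at h1
    have hmeas : MeasurableSet {ω | X ω ≤ t} := hX measurableSet_Iic
    have hcompl : {a | t < X a} = {ω | X ω ≤ t}ᶜ := by
      ext a; simp [not_le]
    have h2 : g t = 1 - (μ {ω | X ω ≤ t}).toReal := by
      rw [hg_def]
      simp only [hcompl]
      rw [prob_compl_eq_one_sub hmeas, ENNReal.toReal_sub_of_le (prob_le_one) ENNReal.one_ne_top]
      simp
    have hexp : -(α * (t / s) ^ 2 - β) * d = β * d + (-b * t ^ 2) := by
      have : (t / s) ^ 2 = t ^ 2 / ((d : ℝ) / N) := by rw [div_pow, hs2]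
      rw [this, hb_def]
      field_simp
      ring
    calc g t = 1 - (μ {ω | X ω ≤ t}).toReal := h2
      _ ≤ Real.exp (-(α * (t / s) ^ 2 - β) * d) := by linarith [h1]
      _ = Real.exp (β * d) * Real.exp (-b * t ^ 2) := by rw [hexp, Real.exp_add]
  -- integrability of X
  have hXint : Integrable X μ := by
    refine Integrable.mono' (integrable_const (1 : ℝ)) hX.aestronglyMeasurable ?_
    filter_upwards with ω
    rw [Real.norm_eq_abs, abs_le]
    exact ⟨by linarith [(hX01 ω).1], (hX01 ω).2⟩
  have hXnn : 0 ≤ᵐ[μ] X := Filter.Eventually.of_forall fun ω => (hX01 ω).1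
  -- layer cake
  have hlc : ∫ ω, X ω ∂μ = ∫ t in Set.Ioi (0:ℝ), g t := hXint.integral_eq_integral_meas_lt hXnn
  -- integrability of g on pieces
  have hgmeas : Measurable g := hg_anti.measurable
  have hint1 : IntegrableOn g (Set.Ioc 0 A) := by
    refine Integrable.mono' ((integrableOn_const (μ := volume) (s := Set.Ioc 0 A) (C := (1:ℝ)) measure_Ioc_lt_top.ne))
      hgmeas.aestronglyMeasurable ?_
    filter_upwards with t
    rw [Real.norm_eq_abs, abs_of_nonneg (hg_nonneg t)]
    exact hg_le_one t
  have hint2 : IntegrableOn g (Set.Ioi A) := by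
    refine Integrable.mono' (((integrable_exp_neg_mul_sq hb).const_mul
      (Real.exp (β * d))).integrableOn) hgmeas.aestronglyMeasurable ?_
    filter_upwards [ae_restrict_mem measurableSet_Ioi] with t ht
    rw [Real.norm_eq_abs, abs_of_nonneg (hg_nonneg t)]
    exact hg_tail t (hA.trans ht)
  -- split
  have hsplit : ∫ t in Set.Ioi (0:ℝ), g t
      = (∫ t in Set.Ioc 0 A, g t) + ∫ t in Set.Ioi A, g t := by
    rw [← Set.Ioc_union_Ioi_eq_Ioi hA.le]
    exact setIntegral_union (Set.Ioc_disjoint_Ioi le_rfl) measurableSet_Ioi hint1 hint2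
  -- first piece ≤ A
  have hpart1 : ∫ t in Set.Ioc 0 A, g t ≤ A := by
    calc ∫ t in Set.Ioc 0 A, g t ≤ ∫ _t in Set.Ioc 0 A, (1:ℝ) := by
          refine setIntegral_mono_on hint1 (integrableOn_const measure_Ioc_lt_top.ne)
            measurableSet_Ioc fun t _ => hg_le_one t
      _ = A := by simp [Real.volume_Ioc, ENNReal.toReal_ofReal hA.le, hA.le]
  -- Gaussian tail integral
  have hFTC : ∫ t in Set.Ioi A, t * Real.exp (-b * t ^ 2)
      = Real.exp (-b * A ^ 2) / (2 * b) := by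
    have hderiv : ∀ x ∈ Set.Ici A, HasDerivAt (fun x => -Real.exp (-b * x ^ 2) / (2 * b))
        (x * Real.exp (-b * x ^ 2)) x := by
      intro x _
      have h1 : HasDerivAt (fun x : ℝ => -b * x ^ 2) (-b * (2 * x)) x := by
        simpa using ((hasDerivAt_pow 2 x).const_mul (-b))
      have h2 := (h1.exp).neg.div_const (2 * b)
      refine h2.congr_deriv ?_
      rw [div_eq_iff (by positivity : (2 * b) ≠ 0)]
      ring
    have hi : IntegrableOn (fun t => t * Real.exp (-b * t ^ 2)) (Set.Ioi A) :=
      (integrable_mul_exp_neg_mul_sq hb).integrableOn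
    have hlim : Filter.Tendsto (fun x => -Real.exp (-b * x ^ 2) / (2 * b))
        Filter.atTop (nhds 0) := by
      have h1 : Filter.Tendsto (fun x : ℝ => -b * x ^ 2) Filter.atTop Filter.atBot := by
        apply Filter.Tendsto.const_mul_atTop_of_neg (by linarith : -b < 0)
        exact Filter.tendsto_pow_atTop two_ne_zero
      have h2 : Filter.Tendsto (fun x : ℝ => Real.exp (-b * x ^ 2)) Filter.atTop (nhds 0) :=
        Real.tendsto_exp_atBot.comp h1
      have := (h2.neg).div_const (2 * b)
      simpa using this
    have := integral_Ioi_of_hasDerivAt_of_tendsto' hderiv hi hlim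
    rw [this]
    ring
  -- second piece
  have hpart2 : ∫ t in Set.Ioi A, g t ≤ 1 / (2 * b * A) := by
    have hbound : ∫ t in Set.Ioi A, g t
        ≤ ∫ t in Set.Ioi A, (Real.exp (β * d) / A) * (t * Real.exp (-b * t ^ 2)) := by
      refine setIntegral_mono_on hint2 ?_ measurableSet_Ioi ?_
      · exact ((integrable_mul_exp_neg_mul_sq hb).const_mul _).integrableOn
      · intro t ht
        have htA : A < t := ht
        have h1 : g t ≤ Real.exp (β * d) * Real.exp (-b * t ^ 2) :=
          hg_tail t (hA.trans htA)
        have h2 : Real.exp (β * d) * Real.exp (-b * t ^ 2)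
            ≤ (Real.exp (β * d) / A) * (t * Real.exp (-b * t ^ 2)) := by
          rw [div_mul_eq_mul_div, le_div_iff₀ hA]
          have : A * Real.exp (-b * t ^ 2) ≤ t * Real.exp (-b * t ^ 2) :=
            mul_le_mul_of_nonneg_right htA.le (Real.exp_nonneg _)
          calc Real.exp (β * d) * Real.exp (-b * t ^ 2) * A
              = Real.exp (β * d) * (A * Real.exp (-b * t ^ 2)) := by ring
            _ ≤ Real.exp (β * d) * (t * Real.exp (-b * t ^ 2)) :=
                mul_le_mul_of_nonneg_left this (Real.exp_nonneg _)
            _ = Real.exp (β * d) * (t * Real.exp (-b * t ^ 2)) := rfl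
        linarith
    rw [integral_const_mul, hFTC] at hbound
    have hexp : -b * A ^ 2 = -(β * d) := by rw [← hA2]; ring
    rw [hexp, Real.exp_neg] at hbound
    calc ∫ t in Set.Ioi A, g t
        ≤ Real.exp (β * d) / A * ((Real.exp (β * d))⁻¹ / (2 * b)) := hbound
      _ = 1 / (2 * b * A) := by
          field_simp
  -- combine
  have hfinal : A + 1 / (2 * b * A)
      = Real.sqrt (β / α) * (1 + 1 / (2 * β * d)) * s := by
    have h1 : 1 / (2 * b * A) = A / (2 * β * d) := by
      rw [show (2:ℝ) * β * d = 2 * (β * d) by ring, ← hA2]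
      field_simp
    rw [h1, hA_def]
    field_simp
  rw [hlc, hsplit]
  calc (∫ t in Set.Ioc 0 A, g t) + ∫ t in Set.Ioi A, g t
      ≤ A + 1 / (2 * b * A) := add_le_add hpart1 hpart2
    _ = _ := hfinal
end

section
/- Let 0 < δ < 1, b_1 = √(1−δ), and define the sequence b_0 = 1, b_{i+1} = (b_i − δ)/b_1. Then for all i ≥ 0, b_{i+1} = b_1^{1−i} − δ·b_1^{-1}·(b_1^{-i} − 1)/(b_1^{-1} − 1), and the minimal i with b_i ≤ δ satisfies i ≥ log(1 − δ^{-1}(b_1 − b_1²))/log(b_1). -/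
/-- The recursion `b₀ = 1`, `b_{i+1} = (b_i - δ)/b₁` with `b₁ = √(1-δ)` has the
closed form `b_{i+1} = b₁^{1-i} - δ b₁⁻¹ (b₁^{-i} - 1)/(b₁⁻¹ - 1)`, and any `i`
with `b_i ≤ δ` (in particular the minimal one) satisfies
`i ≥ log(1 - δ⁻¹(b₁ - b₁²))/log(b₁)`. -/
theorem bracket_recursion (δ : ℝ) (hδ0 : 0 < δ) (hδ1 : δ < 1)
    (b : ℕ → ℝ) (hb0 : b 0 = 1) (hb1 : b 1 = Real.sqrt (1 - δ))
    (hrec : ∀ i : ℕ, b (i + 1) = (b i - δ) / b 1) :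
    (∀ i : ℕ, b (i + 1) =
        b 1 ^ ((1 : ℤ) - (i : ℤ)) -
          δ * (b 1)⁻¹ * ((b 1 ^ (-(i : ℤ)) - 1) / ((b 1)⁻¹ - 1))) ∧
    (∀ i : ℕ, b i ≤ δ → (∀ m : ℕ, m < i → ¬ b m ≤ δ) →
      (i : ℝ) ≥ Real.log (1 - δ⁻¹ * (b 1 - b 1 ^ 2)) / Real.log (b 1)) := by
  set x := b 1 with hx
  have h1δ : 0 < 1 - δ := by linarith
  have hx0 : 0 < x := by rw [hb1]; exact Real.sqrt_pos.mpr h1δ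
  have hxsq : x ^ 2 = 1 - δ := by rw [hb1, Real.sq_sqrt h1δ.le]
  have hx1 : x < 1 := by nlinarith
  have hxne : x ≠ 0 := ne_of_gt hx0
  have h1xne : 1 - x ≠ 0 := by linarith
  have hinv : 0 < x⁻¹ - 1 := by
    have h1 : 1 < x⁻¹ := (one_lt_inv₀ hx0).mpr hx1
    linarith
  have hinvne : x⁻¹ - 1 ≠ 0 := ne_of_gt hinv
  have key : ∀ i : ℕ,
      b (i + 1) = (x * (1 - x) - δ * (1 - x ^ i)) / (x ^ i * (1 - x)) := by
    intro i
    induction i with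
    | zero =>
      simp only [pow_zero, sub_self, mul_zero, sub_zero, one_mul]
      rw [mul_div_assoc, div_self h1xne, mul_one]
    | succ n ih =>
      have hpow : (x : ℝ) ^ n ≠ 0 := pow_ne_zero _ hxne
      rw [hrec (n + 1), ih]
      field_simp
      ring
  constructor
  · intro i
    have hpow : (x : ℝ) ^ i ≠ 0 := pow_ne_zero _ hxne
    rw [key i, zpow_sub₀ hxne, zpow_one, zpow_natCast, zpow_neg, zpow_natCast]
    field_simp
  · intro i hbi hmin
    have hi0 : i ≠ 0 := by rintro rfl; rw [hb0] at hbi; linarith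
    obtain ⟨j, rfl⟩ := Nat.exists_eq_succ_of_ne_zero hi0
    rw [key j] at hbi
    have hy : 0 < x ^ j := pow_pos hx0 j
    have hyx : 0 < x ^ j * (1 - x) := mul_pos hy (by linarith)
    rw [div_le_iff₀ hyx] at hbi
    have h2 : δ * x ^ (j + 1) ≤ δ - (x - x ^ 2) := by
      rw [pow_succ]
      nlinarith [hbi]
    have hC : x ^ (j + 1) ≤ 1 - δ⁻¹ * (x - x ^ 2) := by
      rw [← sub_nonneg]
      have h1 : 1 - δ⁻¹ * (x - x ^ 2) - x ^ (j + 1)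
          = δ⁻¹ * (δ - (x - x ^ 2) - δ * x ^ (j + 1)) := by
        field_simp
      rw [h1]
      exact mul_nonneg (inv_nonneg.mpr hδ0.le) (by linarith)
    have hCpos : 0 < 1 - δ⁻¹ * (x - x ^ 2) := lt_of_lt_of_le (pow_pos hx0 _) hC
    have hlog : ((j : ℝ) + 1) * Real.log x ≤ Real.log (1 - δ⁻¹ * (x - x ^ 2)) := by
      have := Real.log_le_log (pow_pos hx0 (j + 1)) hC
      rwa [Real.log_pow, Nat.cast_add, Nat.cast_one] at this
    have hlogx : Real.log x < 0 := Real.log_neg hx0 hx1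
    rw [ge_iff_le, div_le_iff_of_neg hlogx]
    push_cast
    linarith
end
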